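/- arXiv:2003.12899 — 14 statements merged into one kernel-verified Lean document; each statement's English description precedes it below -/
import Mathlib

section
/- Let X be a real vector space and let Ω₁, Ω₂ ⊆ X be convex sets with Ω₁ ∩ Ω₂ ≠ ∅ satisfying the qualification condition core(Ω₁) ∩ Ω₂ ≠ ∅. Then for every point x̄ ∈ Ω₁ ∩ Ω₂ one has the normal cone intersection rule N(x̄; Ω₁ ∩ Ω₂) = N(x̄; Ω₁) + N(x̄; Ω₂), where the sum is the Minkowski sum of the two sets of linear functions. -/
open Pointwise Set

/-- Algebraic core (algebraic interior) of a set in a real vector space. -/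
def algCore {X : Type*} [AddCommGroup X] [Module ℝ X] (Ω : Set X) : Set X :=
  {x | x ∈ Ω ∧ ∀ v : X, ∃ δ : ℝ, 0 < δ ∧ ∀ t : ℝ, |t| < δ → x + t • v ∈ Ω}

/-- Normal cone to a convex set `Ω` at `xbar`, consisting of linear functionals. -/
def normalCone {X : Type*} [AddCommGroup X] [Module ℝ X] (xbar : X) (Ω : Set X) :
    Set (X →ₗ[ℝ] ℝ) :=
  {f | ∀ x ∈ Ω, f (x - xbar) ≤ 0}

/-- Extremal system of two sets in a vector space. -/
def IsExtremal {X : Type*} [AddCommGroup X] [Module ℝ X] (Ω₁ Ω₂ : Set X) : Prop :=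
  ∃ x₀ : X, ∀ δ : ℝ, 0 < δ → ∃ t₀ : ℝ, |t₀| < δ ∧
    ((fun w => w + t₀ • x₀) '' Ω₁) ∩ Ω₂ = ∅

/-- Domain of a set-valued mapping. -/
def svDom {X Y : Type*} (F : X → Set Y) : Set X := {x | (F x).Nonempty}

/-- Graph of a set-valued mapping. -/
def svGraph {X Y : Type*} (F : X → Set Y) : Set (X × Y) := {p | p.2 ∈ F p.1}

/-- Coderivative of a set-valued mapping `F` at `(xbar, ybar) ∈ gph F` applied to a linear
functional `g`: the set of linear `f` with `(f, -g)` in the normal cone to the graph. -/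
def coderiv {X Y : Type*} [AddCommGroup X] [Module ℝ X] [AddCommGroup Y] [Module ℝ Y]
    (F : X → Set Y) (xbar : X) (ybar : Y) (g : Y →ₗ[ℝ] ℝ) : Set (X →ₗ[ℝ] ℝ) :=
  {f | ∀ x : X, ∀ y ∈ F x, f (x - xbar) - g (y - ybar) ≤ 0}

/-- Subdifferential (of linear functionals) of an extended-real-valued function. -/
def subdiff {X : Type*} [AddCommGroup X] [Module ℝ X] (φ : X → EReal) (xbar : X) :
    Set (X →ₗ[ℝ] ℝ) :=
  {f | ∀ x : X, φ xbar + (f (x - xbar) : EReal) ≤ φ x}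

/-- Effective domain of an extended-real-valued function with values in `ℝ ∪ {+∞}`. -/
def fDom {X : Type*} (φ : X → EReal) : Set X := {x | φ x < ⊤}

/-- Epigraph of an extended-real-valued function. -/
def epi {X : Type*} (φ : X → EReal) : Set (X × ℝ) := {p | φ p.1 ≤ (p.2 : EReal)}

/-- Convexity of an extended-real-valued function (with values in `ℝ ∪ {+∞}`). -/
def ConvexFun {X : Type*} [AddCommGroup X] [Module ℝ X] (φ : X → EReal) : Prop :=
  ∀ x y : X, ∀ t : ℝ, 0 ≤ t → t ≤ 1 →
    φ (t • x + (1 - t) • y) ≤ (t : EReal) * φ x + ((1 - t : ℝ) : EReal) * φ y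

/-- Composition of set-valued mappings. -/
def svComp {X Y Z : Type*} (G : Y → Set Z) (F : X → Set Y) : X → Set Z :=
  fun x => ⋃ y ∈ F x, G y

/-- The linear functional on `X × Y` identified with a pair `(f, g)` of linear
functionals on `X` and `Y`. -/
def pairFun {X Y : Type*} [AddCommGroup X] [Module ℝ X] [AddCommGroup Y] [Module ℝ Y]
    (f : X →ₗ[ℝ] ℝ) (g : Y →ₗ[ℝ] ℝ) : X × Y →ₗ[ℝ] ℝ :=
  f ∘ₗ LinearMap.fst ℝ X Y + g ∘ₗ LinearMap.snd ℝ X Y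

set_option maxHeartbeats 1000000 in
/-- normal cone intersection rule in vector spaces. -/
theorem normal_cone_intersection_rule {X : Type*} [AddCommGroup X] [Module ℝ X]
    {Ω₁ Ω₂ : Set X} (hconv₁ : Convex ℝ Ω₁) (hconv₂ : Convex ℝ Ω₂)
    (hne : (Ω₁ ∩ Ω₂).Nonempty) (hqc : (algCore Ω₁ ∩ Ω₂).Nonempty)
    {xbar : X} (hxbar : xbar ∈ Ω₁ ∩ Ω₂) :
    normalCone xbar (Ω₁ ∩ Ω₂) = normalCone xbar Ω₁ + normalCone xbar Ω₂ := by
  obtain ⟨w, ⟨hwΩ₁, hwcore⟩, hwΩ₂⟩ := hqc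
  ext f
  constructor
  · intro hf
    -- hard direction
    set Θ₁ : Set (X × ℝ) := {p | p.1 + xbar ∈ Ω₁ ∧ p.2 ≤ f p.1} with hΘ₁
    set Θ₂ : Set (X × ℝ) := {p | p.1 + xbar ∈ Ω₂ ∧ 0 < p.2} with hΘ₂
    have hcΘ₁ : Convex ℝ Θ₁ := by
      rintro p ⟨hp1, hp2⟩ q ⟨hq1, hq2⟩ a b ha hb hab
      constructor
      · have : (a • p + b • q).1 + xbar = a • (p.1 + xbar) + b • (q.1 + xbar) := by
          have hb' : b = 1 - a := by linarith
          subst hb'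
          simp only [Prod.fst_add, Prod.smul_fst]
          module
        rw [this]
        exact hconv₁ hp1 hq1 ha hb hab
      · have : f (a • p + b • q).1 = a * f p.1 + b * f q.1 := by
          simp [smul_eq_mul]
        rw [this]
        simp only [Prod.snd_add, Prod.smul_snd, smul_eq_mul]
        have := mul_le_mul_of_nonneg_left hp2 ha
        have := mul_le_mul_of_nonneg_left hq2 hb
        linarith
    have hcΘ₂ : Convex ℝ Θ₂ := by
      rintro p ⟨hp1, hp2⟩ q ⟨hq1, hq2⟩ a b ha hb hab
      constructor
      · have : (a • p + b • q).1 + xbar = a • (p.1 + xbar) + b • (q.1 + xbar) := by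
          have hb' : b = 1 - a := by linarith
          subst hb'
          simp only [Prod.fst_add, Prod.smul_fst]
          module
        rw [this]
        exact hconv₂ hp1 hq1 ha hb hab
      · simp only [Prod.snd_add, Prod.smul_snd, smul_eq_mul]
        rcases eq_or_lt_of_le ha with h | h
        · have hb1 : b = 1 := by linarith
          rw [← h, hb1]; simpa using hq2
        · nlinarith
    set C : Set (X × ℝ) := Θ₁ - Θ₂ with hC
    have hcC : Convex ℝ C := hcΘ₁.sub hcΘ₂
    have h0C : (0 : X × ℝ) ∉ C := by
      rintro ⟨p, hp, q, hq, hpq⟩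
      have hpq' : p = q := by rwa [sub_eq_zero] at hpq
      subst hpq'
      have hmem : p.1 + xbar ∈ Ω₁ ∩ Ω₂ := ⟨hp.1, hq.1⟩
      have := hf _ hmem
      rw [add_sub_cancel_right] at this
      exact absurd (hp.2.trans this) (not_le.2 hq.2)
    set c₁ : X × ℝ := (w - xbar, f (w - xbar) - 1) with hc₁def
    have hc₁Θ₁ : c₁ ∈ Θ₁ := by
      refine ⟨?_, by simp [hc₁def]⟩
      simpa [hc₁def, sub_add_cancel] using hwΩ₁
    set θ₂₀ : X × ℝ := (w - xbar, 1) with hθ₂₀def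
    have hθ₂₀Θ₂ : θ₂₀ ∈ Θ₂ := by
      refine ⟨?_, one_pos⟩
      simpa [hθ₂₀def, sub_add_cancel] using hwΩ₂
    set c₀ : X × ℝ := c₁ - θ₂₀ with hc₀def
    have hc₀C : c₀ ∈ C := Set.sub_mem_sub hc₁Θ₁ hθ₂₀Θ₂
    -- c₁ is in the core of Θ₁
    have hcore : ∀ v : X × ℝ, ∃ δ : ℝ, 0 < δ ∧ ∀ t : ℝ, |t| < δ → c₁ + t • v ∈ Θ₁ := by
      rintro ⟨v₁, ρ⟩
      obtain ⟨δ₁, hδ₁, hδ₁'⟩ := hwcore v₁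
      refine ⟨min δ₁ (1 / (|ρ - f v₁| + 1)), lt_min hδ₁ (by positivity), ?_⟩
      intro t ht
      have ht₁ : |t| < δ₁ := lt_of_lt_of_le ht (min_le_left _ _)
      have ht₂ : |t| < 1 / (|ρ - f v₁| + 1) := lt_of_lt_of_le ht (min_le_right _ _)
      constructor
      · have : (c₁ + t • (v₁, ρ)).1 + xbar = w + t • v₁ := by
          simp only [hc₁def, Prod.fst_add, Prod.smul_fst]
          abel
        rw [this]
        exact hδ₁' t ht₁
      · have hfe : f (c₁ + t • (v₁, ρ)).1 = f (w - xbar) + t * f v₁ := by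
          simp [hc₁def, smul_eq_mul]
        rw [hfe]
        simp only [hc₁def, Prod.snd_add, Prod.smul_snd, smul_eq_mul]
        have h1 : t * (ρ - f v₁) ≤ |t| * (|ρ - f v₁| + 1) := by
          calc t * (ρ - f v₁) ≤ |t * (ρ - f v₁)| := le_abs_self _
            _ = |t| * |ρ - f v₁| := abs_mul _ _
            _ ≤ |t| * (|ρ - f v₁| + 1) := by
                apply mul_le_mul_of_nonneg_left (by linarith) (abs_nonneg t)
        have h2 : |t| * (|ρ - f v₁| + 1) < 1 := by
          rw [div_eq_inv_mul, mul_one] at ht₂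
          calc |t| * (|ρ - f v₁| + 1) < (|ρ - f v₁| + 1)⁻¹ * (|ρ - f v₁| + 1) := by
                apply mul_lt_mul_of_pos_right ht₂ (by positivity)
            _ = 1 := by field_simp
        nlinarith
    set D : Set (X × ℝ) := {p | p + c₀ ∈ C} with hD
    have hcD : Convex ℝ D := by
      rintro p hp q hq a b ha hb hab
      have : a • p + b • q + c₀ = a • (p + c₀) + b • (q + c₀) := by
        have hb' : b = 1 - a := by linarith
        subst hb'
        module
      show a • p + b • q + c₀ ∈ C
      rw [this]
      exact hcC hp hq ha hb hab
    have h0D : (0 : X × ℝ) ∈ D := by simpa [hD] using hc₀C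
    have hnc₀D : -c₀ ∉ D := by simpa [hD] using h0C
    -- D absorbs: every point has small multiples inside D
    have hsmall : ∀ v : X × ℝ, ∃ δ : ℝ, 0 < δ ∧ ∀ t : ℝ, |t| < δ → t • v ∈ D := by
      intro v
      obtain ⟨δ, hδ, hδ'⟩ := hcore v
      refine ⟨δ, hδ, fun t ht => ?_⟩
      show t • v + c₀ ∈ C
      have : t • v + c₀ = (c₁ + t • v) - θ₂₀ := by rw [hc₀def]; abel
      rw [this]
      exact Set.sub_mem_sub (hδ' t ht) hθ₂₀Θ₂
    have habs : Absorbent ℝ D := by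
      intro x
      obtain ⟨δ, hδ, hδ'⟩ := hsmall x
      apply Absorbs.of_norm
      refine ⟨1 / δ + 1, fun c hc => ?_⟩
      have hc0 : c ≠ 0 := by
        intro h; rw [h] at hc; simp at hc
        have := inv_pos.2 hδ
        have := one_div_pos.2 hδ
        linarith
      rw [Set.singleton_subset_iff, mem_smul_set_iff_inv_smul_mem₀ hc0]
      apply hδ'
      rw [abs_inv]
      rw [Real.norm_eq_abs] at hc
      have habs0 : (0:ℝ) < |c| := lt_of_lt_of_le (by positivity) hc
      rw [inv_lt_comm₀ habs0 hδ]
      calc δ⁻¹ < 1/δ + 1 := by rw [one_div]; linarith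
        _ ≤ |c| := hc
    -- gauge separation
    have hc₀ne : -c₀ ≠ 0 := by
      intro h
      apply hnc₀D
      rw [h]; exact h0D
    set γ := gauge D (-c₀) with hγdef
    have hγ1 : 1 ≤ γ := one_le_gauge_of_notMem (hcD.starConvex h0D) (habs _) hnc₀D
    have hext := exists_extension_of_le_sublinear (LinearPMap.mkSpanSingleton (-c₀) γ hc₀ne)
      (gauge D) (fun c hc x => by rw [gauge_smul_of_nonneg hc.le]; rfl)
      (gauge_add_le hcD habs) ?_
    swap
    · rintro ⟨z, hz⟩
      have hz' : z ∈ (Submodule.span ℝ {-c₀} : Submodule ℝ (X × ℝ)) := hz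
      obtain ⟨a, ha⟩ := Submodule.mem_span_singleton.1 hz'
      subst ha
      have happ : (LinearPMap.mkSpanSingleton (-c₀) γ hc₀ne) ⟨a • (-c₀), hz⟩ = a • γ :=
        LinearPMap.mkSpanSingleton'_apply _ _ _ a _
      rw [happ]
      rcases le_or_gt 0 a with ha | ha
      · exact le_of_eq (gauge_smul_of_nonneg ha (-c₀)).symm
      · have : a • γ ≤ 0 := by
          rw [smul_eq_mul]
          exact mul_nonpos_of_nonpos_of_nonneg ha.le (by linarith)
        exact this.trans (gauge_nonneg _)
    obtain ⟨L, hLext, hLle⟩ := hext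
    have hLc₀ : L (-c₀) = γ := by
      have := hLext ⟨-c₀, Submodule.mem_span_singleton_self _⟩
      rw [this, LinearPMap.mkSpanSingleton_apply]
    have hC_le : ∀ p ∈ C, L p ≤ 0 := by
      intro p hp
      have hpD : p - c₀ ∈ D := by show p - c₀ + c₀ ∈ C; rwa [sub_add_cancel]
      have h1 : L (p - c₀) ≤ 1 := (hLle _).trans (gauge_le_one_of_mem hpD)
      have h2 : L p = L (p - c₀) + L c₀ := by rw [← map_add]; congr 1; abel
      have h3 : L c₀ = -γ := by rw [← hLc₀, ← map_neg, neg_neg]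
      rw [h2, h3]; linarith
    set g : X →ₗ[ℝ] ℝ := L ∘ₗ LinearMap.inl ℝ X ℝ with hgdef
    set β : ℝ := L (0, 1) with hβdef
    have hLp : ∀ p : X × ℝ, L p = g p.1 + p.2 * β := by
      intro p
      have hp : p = (p.1, (0:ℝ)) + p.2 • ((0:X), (1:ℝ)) := by
        simp [Prod.ext_iff]
      conv_lhs => rw [hp]
      rw [map_add, map_smul, smul_eq_mul]
      rfl
    -- key inequality
    have hkey : ∀ x₁ ∈ Ω₁, ∀ x₂ ∈ Ω₂, ∀ lam₁ ≤ f (x₁ - xbar), ∀ lam₂ : ℝ, 0 < lam₂ →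
        g (x₁ - xbar) + lam₁ * β ≤ g (x₂ - xbar) + lam₂ * β := by
      intro x₁ hx₁ x₂ hx₂ lam₁ hlam₁ lam₂ hlam₂
      have hmem : ((x₁ - xbar, lam₁) : X × ℝ) - (x₂ - xbar, lam₂) ∈ C := by
        apply Set.sub_mem_sub
        · exact ⟨by rwa [sub_add_cancel], hlam₁⟩
        · exact ⟨by rwa [sub_add_cancel], hlam₂⟩
      have := hC_le _ hmem
      rw [show ((x₁ - xbar, lam₁) : X × ℝ) - (x₂ - xbar, lam₂)
          = ((x₁ - xbar) - (x₂ - xbar), lam₁ - lam₂) from rfl, hLp] at this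
      simp only [map_sub] at this ⊢
      linarith
    have hβ0 : 0 ≤ β := by
      have := hkey xbar hxbar.1 xbar hxbar.2 (-1) (by simp) 1 one_pos
      linarith
    have hβ : 0 < β := by
      rcases eq_or_lt_of_le hβ0 with h | h
      · exfalso
        have hg0 : ∀ v : X, g v = 0 := by
          intro v
          obtain ⟨δ, hδ, hδ'⟩ := hwcore v
          have key : ∀ t : ℝ, |t| < δ → t * g v ≤ 0 := by
            intro t ht
            have h1 := hkey (w + t • v) (hδ' t ht) w hwΩ₂ (f (w + t • v - xbar)) le_rfl 1 one_pos
            rw [← h] at h1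
            have h2 : g (w + t • v - xbar) = g (w - xbar) + t * g v := by
              have : w + t • v - xbar = (w - xbar) + t • v := by abel
              rw [this, map_add, map_smul, smul_eq_mul]
            rw [h2] at h1
            linarith
          have hp := key (δ/2) (by rw [abs_of_pos (by linarith)]; linarith)
          have hm := key (-(δ/2)) (by rw [abs_neg, abs_of_pos (by linarith)]; linarith)
          nlinarith
        have : L (-c₀) = 0 := by
          rw [hLp, hg0, ← h]; ring
        rw [hLc₀] at this; linarith
      · exact h
    -- pass to the limit lam₂ → 0
    have hkey2 : ∀ x₁ ∈ Ω₁, ∀ x₂ ∈ Ω₂,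
        g (x₁ - xbar) + f (x₁ - xbar) * β ≤ g (x₂ - xbar) := by
      intro x₁ hx₁ x₂ hx₂
      by_contra hcon
      push_neg at hcon
      set ε := (g (x₁ - xbar) + f (x₁ - xbar) * β - g (x₂ - xbar)) / 2 with hε
      have hεpos : 0 < ε := by simp only [hε]; linarith
      have := hkey x₁ hx₁ x₂ hx₂ (f (x₁ - xbar)) le_rfl (ε / β) (div_pos hεpos hβ)
      rw [div_mul_cancel₀ _ (ne_of_gt hβ)] at this
      simp only [hε] at this
      linarith
    -- construct the decomposition
    set f₂ : X →ₗ[ℝ] ℝ := -(β⁻¹) • g with hf₂def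
    have hg_nonneg : ∀ x ∈ Ω₂, 0 ≤ g (x - xbar) := by
      intro x hx
      have := hkey2 xbar hxbar.1 x hx
      simpa using this
    have hgf : ∀ x ∈ Ω₁, g (x - xbar) + f (x - xbar) * β ≤ 0 := by
      intro x hx
      have := hkey2 x hx xbar hxbar.2
      simpa using this
    rw [Set.mem_add]
    refine ⟨f - f₂, ?_, f₂, ?_, by abel⟩
    · intro x hx
      have h1 := hgf x hx
      have h2 : (f - f₂) (x - xbar) = f (x - xbar) + β⁻¹ * g (x - xbar) := by
        simp [hf₂def, sub_eq_add_neg]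
      rw [h2]
      have h3 : β⁻¹ * (g (x - xbar) + f (x - xbar) * β) ≤ 0 :=
        mul_nonpos_of_nonneg_of_nonpos (by positivity) h1
      have h4 : β⁻¹ * (g (x - xbar) + f (x - xbar) * β)
          = β⁻¹ * g (x - xbar) + f (x - xbar) := by
        field_simp
      linarith [h4 ▸ h3]
    · intro x hx
      have h1 := hg_nonneg x hx
      have h2 : f₂ (x - xbar) = -(β⁻¹ * g (x - xbar)) := by
        simp [hf₂def]
      rw [h2]
      have : 0 ≤ β⁻¹ * g (x - xbar) := by positivity
      linarith
  · -- easy direction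
    rintro hf x hx
    rw [Set.mem_add] at hf
    obtain ⟨f₁, hf₁, f₂, hf₂, rfl⟩ := hf
    have h1 := hf₁ x hx.1
    have h2 := hf₂ x hx.2
    simp only [LinearMap.add_apply]
    linarith
end

section
/- Let Ω₁ and Ω₂ be nonempty convex subsets of a real vector space X. Then the system {Ω₁, Ω₂} is extremal in X if and only if 0 ∉ core(Ω₁ − Ω₂), where Ω₁ − Ω₂ := {x − y : x ∈ Ω₁, y ∈ Ω₂}. -/
open Pointwise Set

/-- a system of two nonempty convex sets is extremal iff
`0 ∉ core (Ω₁ - Ω₂)`. -/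
theorem extremal_iff_zero_notMem_core_diff {X : Type*} [AddCommGroup X] [Module ℝ X]
    {Ω₁ Ω₂ : Set X} (hne₁ : Ω₁.Nonempty) (hne₂ : Ω₂.Nonempty)
    (hconv₁ : Convex ℝ Ω₁) (hconv₂ : Convex ℝ Ω₂) :
    IsExtremal Ω₁ Ω₂ ↔ (0 : X) ∉ algCore (Ω₁ - Ω₂) := by
  constructor
  · rintro ⟨x₀, hx₀⟩ ⟨hmem, hcore⟩
    obtain ⟨δ, hδ, hδmem⟩ := hcore x₀
    obtain ⟨t₀, ht₀, hempty⟩ := hx₀ δ hδ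
    have h := hδmem (-t₀) (by rwa [abs_neg])
    rw [zero_add] at h
    obtain ⟨a, ha, b, hb, hab⟩ := h
    have : b ∈ ((fun w => w + t₀ • x₀) '' Ω₁) ∩ Ω₂ := by
      refine ⟨⟨a, ha, ?_⟩, hb⟩
      have : a - b = -t₀ • x₀ := hab
      rw [sub_eq_iff_eq_add] at this
      rw [this]; module
    rw [hempty] at this
    exact this
  · intro h
    by_cases h0 : (0 : X) ∈ Ω₁ - Ω₂
    · have hv : ¬ ∀ v : X, ∃ δ : ℝ, 0 < δ ∧ ∀ t : ℝ, |t| < δ → (0 : X) + t • v ∈ Ω₁ - Ω₂ :=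
        fun hc => h ⟨h0, hc⟩
      push_neg at hv
      obtain ⟨v, hv⟩ := hv
      refine ⟨v, fun δ hδ => ?_⟩
      obtain ⟨t, ht, htn⟩ := hv δ hδ
      refine ⟨-t, by rwa [abs_neg], ?_⟩
      rw [Set.eq_empty_iff_forall_notMem]
      rintro y ⟨⟨a, ha, rfl⟩, hy⟩
      apply htn
      rw [zero_add]
      refine ⟨a, ha, a + -t • v, hy, ?_⟩
      show a - (a + -t • v) = t • v
      module
    · refine ⟨0, fun δ hδ => ⟨0, by simpa using hδ, ?_⟩⟩
      rw [Set.eq_empty_iff_forall_notMem]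
      rintro y ⟨⟨a, ha, rfl⟩, hy⟩
      simp only [smul_zero, add_zero] at hy
      exact h0 ⟨a, ha, a, hy, by simp⟩
end

section
/- Let Ω₁ and Ω₂ be nonempty convex subsets of a real vector space X. If the system {Ω₁, Ω₂} is extremal in X, then core(Ω₁) ∩ Ω₂ = ∅ and core(Ω₂) ∩ Ω₁ = ∅. -/
open Pointwise Set

/-- extremality of a system of nonempty convex sets implies
`core (Ω₁) ∩ Ω₂ = ∅` and `core (Ω₂) ∩ Ω₁ = ∅`. -/
theorem extremal_implies_core_disjoint {X : Type*} [AddCommGroup X] [Module ℝ X]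
    {Ω₁ Ω₂ : Set X} (hne₁ : Ω₁.Nonempty) (hne₂ : Ω₂.Nonempty)
    (hconv₁ : Convex ℝ Ω₁) (hconv₂ : Convex ℝ Ω₂)
    (hext : IsExtremal Ω₁ Ω₂) :
    algCore Ω₁ ∩ Ω₂ = ∅ ∧ algCore Ω₂ ∩ Ω₁ = ∅ := by
  obtain ⟨x₀, hx₀⟩ := hext
  constructor
  · ext x
    simp only [Set.mem_inter_iff, Set.mem_empty_iff_false, iff_false]
    rintro ⟨⟨hx1, hcore⟩, hx2⟩
    obtain ⟨δ, hδ, hδall⟩ := hcore x₀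
    obtain ⟨t₀, ht₀, hdisj⟩ := hx₀ δ hδ
    have h1 : x + (-t₀) • x₀ ∈ Ω₁ := hδall (-t₀) (by rwa [abs_neg])
    have : x ∈ ((fun w => w + t₀ • x₀) '' Ω₁) ∩ Ω₂ := by
      refine ⟨⟨x + (-t₀) • x₀, h1, ?_⟩, hx2⟩
      simp [neg_smul]
    rw [hdisj] at this
    exact this
  · ext x
    simp only [Set.mem_inter_iff, Set.mem_empty_iff_false, iff_false]
    rintro ⟨⟨hx2, hcore⟩, hx1⟩
    obtain ⟨δ, hδ, hδall⟩ := hcore x₀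
    obtain ⟨t₀, ht₀, hdisj⟩ := hx₀ δ hδ
    have h2 : x + t₀ • x₀ ∈ Ω₂ := hδall t₀ ht₀
    have : x + t₀ • x₀ ∈ ((fun w => w + t₀ • x₀) '' Ω₁) ∩ Ω₂ :=
      ⟨⟨x, hx1, rfl⟩, h2⟩
    rw [hdisj] at this
    exact this
end

section
/- Let Ω₁ and Ω₂ be nonempty convex subsets of a real vector space X. If the system {Ω₁, Ω₂} is extremal in X and the set difference Ω₁ − Ω₂ := {x − y : x ∈ Ω₁, y ∈ Ω₂} is core-solid, then Ω₁ and Ω₂ are separated by a hyperplane, i.e., there exists a nonzero linear function f : X → ℝ with sup{f(x) : x ∈ Ω₁} ≤ inf{f(x) : x ∈ Ω₂}. -/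
open Pointwise Set

section Aux

variable {X : Type*} [AddCommGroup X] [Module ℝ X]

/-- If `0` is in the algebraic core of a convex set `C` and `c ∈ C`, then `r • c` is in the
algebraic core for `0 ≤ r < 1`. -/
lemma smul_mem_algCore_of_mem {C : Set X} (hC : Convex ℝ C) (h0 : (0 : X) ∈ algCore C)
    {c : X} (hc : c ∈ C) {r : ℝ} (hr0 : 0 ≤ r) (hr1 : r < 1) : r • c ∈ algCore C := by
  have h1r : 0 < 1 - r := by linarith
  constructor
  · have := hC hc h0.1 hr0 h1r.le (by ring : r + (1 - r) = 1)
    simpa using this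
  · intro v
    obtain ⟨δ₀, hδ₀, hδ⟩ := h0.2 v
    refine ⟨(1 - r) * δ₀, by positivity, fun t ht => ?_⟩
    have hmem : (t / (1 - r)) • v ∈ C := by
      have : |t / (1 - r)| < δ₀ := by
        rw [abs_div, abs_of_pos h1r, div_lt_iff₀ h1r]
        linarith [ht, mul_comm δ₀ (1 - r)]
      simpa using hδ _ this
    have hmem2 := hC hc hmem hr0 h1r.le (by ring : r + (1 - r) = 1)
    have hs : (1 - r) * (t / (1 - r)) = t := by field_simp
    rwa [smul_smul, hs] at hmem2

lemma absorbent_of_zero_mem_algCore {C : Set X} (h0 : (0 : X) ∈ algCore C) :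
    Absorbent ℝ C := by
  intro x
  obtain ⟨δ, hδ, h⟩ := h0.2 x
  rw [absorbs_iff_norm]
  refine ⟨2 / δ, fun c hc y hy => ?_⟩
  have hcge : 2 / δ ≤ |c| := by rwa [Real.norm_eq_abs] at hc
  have hcpos : 0 < |c| := lt_of_lt_of_le (by positivity) hcge
  have hc0 : c ≠ 0 := fun h' => by simp [h'] at hcpos
  rw [mem_smul_set_iff_inv_smul_mem₀ hc0]
  rw [mem_singleton_iff] at hy
  subst hy
  have hu : 0 ≤ |c|⁻¹ := by positivity
  have h1 : |c|⁻¹ * |c| = 1 := inv_mul_cancel₀ (ne_of_gt hcpos)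
  have h2 : |c|⁻¹ * 2 / δ ≤ 1 := by
    rw [mul_div_assoc]
    calc |c|⁻¹ * (2 / δ) ≤ |c|⁻¹ * |c| := mul_le_mul_of_nonneg_left hcge hu
      _ = 1 := h1
  have h3 : |c|⁻¹ * 2 ≤ δ := (div_le_one hδ).mp h2
  have habs : |c⁻¹| < δ := by rw [abs_inv]; linarith
  have := h c⁻¹ habs
  simpa using this

end Aux

/-- an extremal system of nonempty convex sets with core-solid
difference is separated by a hyperplane. -/
theorem extremal_implies_separation {X : Type*} [AddCommGroup X] [Module ℝ X]
    {Ω₁ Ω₂ : Set X} (hne₁ : Ω₁.Nonempty) (hne₂ : Ω₂.Nonempty)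
    (hconv₁ : Convex ℝ Ω₁) (hconv₂ : Convex ℝ Ω₂)
    (hext : IsExtremal Ω₁ Ω₂) (hsolid : (algCore (Ω₁ - Ω₂)).Nonempty) :
    ∃ f : X →ₗ[ℝ] ℝ, f ≠ 0 ∧ ∀ x ∈ Ω₁, ∀ y ∈ Ω₂, f x ≤ f y := by
  classical
  have hD : Convex ℝ (Ω₁ - Ω₂) := hconv₁.sub hconv₂
  obtain ⟨a, haD⟩ := hsolid
  -- Step 1 : 0 ∉ algCore (Ω₁ - Ω₂)
  have h0 : (0 : X) ∉ algCore (Ω₁ - Ω₂) := by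
    rintro ⟨-, hcore⟩
    obtain ⟨x₀, hx₀⟩ := hext
    obtain ⟨δ, hδ, hδmem⟩ := hcore x₀
    obtain ⟨t₀, ht₀, hdisj⟩ := hx₀ δ hδ
    have hmem : (-t₀) • x₀ ∈ Ω₁ - Ω₂ := by
      simpa using hδmem (-t₀) (by simpa using ht₀)
    rw [Set.mem_sub] at hmem
    obtain ⟨x, hx, y, hy, hxy⟩ := hmem
    have hyx : y - x = t₀ • x₀ := by
      have := congrArg Neg.neg hxy
      rw [neg_sub] at this
      rw [this, neg_smul, neg_neg]
    have hy' : y ∈ ((fun w => w + t₀ • x₀) '' Ω₁) ∩ Ω₂ := by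
      refine ⟨⟨x, hx, ?_⟩, hy⟩
      rw [sub_eq_iff_eq_add] at hyx
      rw [hyx]; abel
    rw [hdisj] at hy'
    exact hy'
  -- Step 2 : translate so that 0 is in the algebraic core
  set C : Set X := {x | x + a ∈ Ω₁ - Ω₂} with hCdef
  have hCconv : Convex ℝ C := by
    intro x hx y hy s t hs ht hst
    have hmem := hD (hx : x + a ∈ Ω₁ - Ω₂) (hy : y + a ∈ Ω₁ - Ω₂) hs ht hst
    show s • x + t • y + a ∈ Ω₁ - Ω₂
    have hsa : s • a + t • a = a := by rw [← add_smul, hst, one_smul]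
    have heq : s • (x + a) + t • (y + a) = s • x + t • y + a := by
      rw [smul_add, smul_add, add_add_add_comm, hsa]
    rw [← heq]; exact hmem
  have hcore_iff : ∀ x : X, x ∈ algCore C ↔ x + a ∈ algCore (Ω₁ - Ω₂) := by
    intro x
    constructor
    · rintro ⟨hx, h⟩
      refine ⟨hx, fun v => ?_⟩
      obtain ⟨δ, hδ, hmem⟩ := h v
      exact ⟨δ, hδ, fun t ht => by
        have := hmem t ht
        simpa [hCdef, add_right_comm] using this⟩
    · rintro ⟨hx, h⟩
      refine ⟨hx, fun v => ?_⟩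
      obtain ⟨δ, hδ, hmem⟩ := h v
      exact ⟨δ, hδ, fun t ht => by
        have := hmem t ht
        show x + t • v + a ∈ Ω₁ - Ω₂
        rwa [add_right_comm]⟩
  have h0C : (0 : X) ∈ algCore C := by rw [hcore_iff]; simpa using haD
  have habs : Absorbent ℝ C := absorbent_of_zero_mem_algCore h0C
  -- Step 3 : the gauge of C at -a is at least 1
  have hbC : (1 : ℝ) ≤ gauge C (-a) := by
    rw [gauge_def]
    apply le_csInf
    · obtain ⟨δ, hδ, hmem⟩ := h0C.2 (-a)
      refine ⟨(δ/2)⁻¹, mem_Ioi.mpr (by positivity), ?_⟩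
      have h1 : (δ/2) • (-a) ∈ C := by
        simpa using hmem (δ/2) (by rw [abs_of_pos (by positivity)]; linarith)
      rw [mem_smul_set_iff_inv_smul_mem₀ (by positivity : ((δ/2)⁻¹:ℝ) ≠ 0)]
      simpa using h1
    · rintro r ⟨hr, hmem⟩
      by_contra hlt
      push_neg at hlt
      rw [mem_Ioi] at hr
      rw [mem_smul_set_iff_inv_smul_mem₀ (ne_of_gt hr)] at hmem
      have hmem2 : r • (r⁻¹ • (-a)) ∈ algCore C :=
        smul_mem_algCore_of_mem hCconv h0C hmem hr.le hlt
      rw [smul_inv_smul₀ (ne_of_gt hr)] at hmem2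
      have h' := (hcore_iff (-a)).mp hmem2
      rw [neg_add_cancel] at h'
      exact h0 h'
  -- Step 4 : Hahn-Banach extension
  have hbne : (-a : X) ≠ 0 := by
    intro h
    apply h0
    have ha0 : a = 0 := by simpa [neg_eq_zero] using h
    rwa [← ha0]
  have Hscale : ∀ c : ℝ, c • (-a : X) = 0 → c • gauge C (-a) = 0 := by
    intro c hc
    rcases smul_eq_zero.mp hc with h | h
    · simp [h]
    · exact absurd h hbne
  have hdom : ∀ x : (LinearPMap.mkSpanSingleton' (σ := RingHom.id ℝ) (-a : X) (gauge C (-a)) Hscale).domain,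
      LinearPMap.mkSpanSingleton' (σ := RingHom.id ℝ) (-a : X) (gauge C (-a)) Hscale x ≤ gauge C x := by
    rintro ⟨x, hx⟩
    have hx' : x ∈ Submodule.span ℝ {(-a : X)} := by
      rwa [LinearPMap.domain_mkSpanSingleton] at hx
    obtain ⟨c, hc⟩ := Submodule.mem_span_singleton.mp hx'
    induction hc
    rw [LinearPMap.mkSpanSingleton'_apply, RingHom.id_apply]
    rcases le_or_gt 0 c with h | h
    · rw [gauge_smul_of_nonneg h]
    · have h1 : c • gauge C (-a) ≤ 0 := by
        have := gauge_nonneg (s := C) (-a)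
        rw [smul_eq_mul]
        nlinarith
      exact h1.trans (gauge_nonneg _)
  obtain ⟨g, hg_eq, hg_le⟩ := exists_extension_of_le_sublinear
    (LinearPMap.mkSpanSingleton' (σ := RingHom.id ℝ) (-a : X) (gauge C (-a)) Hscale) (gauge C)
    (fun c hc x => by rw [gauge_smul_of_nonneg hc.le, smul_eq_mul])
    (fun x y => gauge_add_le hCconv habs x y)
    hdom
  have hb_mem : (-a : X) ∈ (LinearPMap.mkSpanSingleton' (σ := RingHom.id ℝ) (-a : X) (gauge C (-a)) Hscale).domain := by
    rw [LinearPMap.domain_mkSpanSingleton]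
    exact Submodule.mem_span_singleton_self _
  have hgb : g (-a) = gauge C (-a) := by
    calc g (-a) = (LinearPMap.mkSpanSingleton' (σ := RingHom.id ℝ) (-a : X) (gauge C (-a)) Hscale) ⟨-a, hb_mem⟩ :=
          hg_eq ⟨-a, hb_mem⟩
      _ = gauge C (-a) := LinearPMap.mkSpanSingleton'_apply_self _ _ _ _
  have hgb1 : 1 ≤ g (-a) := by rw [hgb]; exact hbC
  refine ⟨g, ?_, ?_⟩
  · intro h
    rw [h] at hgb1
    norm_num at hgb1
  · intro x hx y hy
    have hdmem : x - y ∈ Ω₁ - Ω₂ := Set.sub_mem_sub hx hy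
    have hCmem : x - y - a ∈ C := by
      show x - y - a + a ∈ Ω₁ - Ω₂
      simpa using hdmem
    have h1 : g (x - y - a) ≤ 1 := (hg_le _).trans (gauge_le_one_of_mem hCmem)
    have h2 : g (x - y - a) = g x - g y - g a := by rw [map_sub, map_sub]
    have h3 : g (-a) = -(g a) := map_neg g a
    rw [h3] at hgb1
    linarith
end

section
/- Let Ω₁ and Ω₂ be nonempty convex subsets of a real vector space X and let x̄ ∈ Ω₁ ∩ Ω₂. Then Ω₁ and Ω₂ are separated by a hyperplane (i.e., there exists a nonzero linear f : X → ℝ with sup{f(x) : x ∈ Ω₁} ≤ inf{f(x) : x ∈ Ω₂}) if and only if N(x̄; Ω₁) ∩ (−N(x̄; Ω₂)) ≠ {0}, i.e., there exists a nonzero linear function f with f ∈ N(x̄; Ω₁) and −f ∈ N(x̄; Ω₂). -/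
open Pointwise Set

/-- for nonempty convex sets with a common point `xbar`, separation by a
hyperplane is equivalent to `N(xbar; Ω₁) ∩ (−N(xbar; Ω₂)) ≠ {0}`. -/
theorem separation_iff_normal_cone_condition {X : Type*} [AddCommGroup X] [Module ℝ X]
    {Ω₁ Ω₂ : Set X} (hne₁ : Ω₁.Nonempty) (hne₂ : Ω₂.Nonempty)
    (hconv₁ : Convex ℝ Ω₁) (hconv₂ : Convex ℝ Ω₂)
    {xbar : X} (hxbar : xbar ∈ Ω₁ ∩ Ω₂) :
    (∃ f : X →ₗ[ℝ] ℝ, f ≠ 0 ∧ ∀ x ∈ Ω₁, ∀ y ∈ Ω₂, f x ≤ f y) ↔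
      (∃ f : X →ₗ[ℝ] ℝ, f ≠ 0 ∧ f ∈ normalCone xbar Ω₁ ∧ -f ∈ normalCone xbar Ω₂) := by
  constructor
  · rintro ⟨f, hf, hsep⟩
    refine ⟨f, hf, ?_, ?_⟩
    · intro x hx
      have := hsep x hx xbar hxbar.2
      simpa [sub_nonpos] using (by simpa using this)
    · intro y hy
      have := hsep xbar hxbar.1 y hy
      simp only [LinearMap.neg_apply, neg_nonpos, map_sub]
      linarith
  · rintro ⟨f, hf, h₁, h₂⟩
    refine ⟨f, hf, ?_⟩
    intro x hx y hy
    have hx' := h₁ x hx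
    have hy' := h₂ y hy
    simp only [LinearMap.neg_apply, map_sub] at hx' hy'
    linarith
end

section
/- Let Ω₁ and Ω₂ be nonempty convex subsets of a real vector space X. If Ω₁ and Ω₂ are separated by a hyperplane, i.e., there exists a nonzero linear function f : X → ℝ with sup{f(x) : x ∈ Ω₁} ≤ inf{f(x) : x ∈ Ω₂}, then the system {Ω₁, Ω₂} is extremal in X. -/
open Pointwise Set

/-- hyperplane separation of nonempty convex sets yields set extremality. -/
theorem separation_implies_extremal {X : Type*} [AddCommGroup X] [Module ℝ X]
    {Ω₁ Ω₂ : Set X} (hne₁ : Ω₁.Nonempty) (hne₂ : Ω₂.Nonempty)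
    (hconv₁ : Convex ℝ Ω₁) (hconv₂ : Convex ℝ Ω₂)
    (hsep : ∃ f : X →ₗ[ℝ] ℝ, f ≠ 0 ∧ ∀ x ∈ Ω₁, ∀ y ∈ Ω₂, f x ≤ f y) :
    IsExtremal Ω₁ Ω₂ := by
  obtain ⟨f, hf0, hsep⟩ := hsep
  obtain ⟨v, hv⟩ : ∃ v, f v ≠ 0 := by
    by_contra h
    push_neg at h
    exact hf0 (LinearMap.ext fun x => by simp [h x])
  refine ⟨(f v)⁻¹ • v, fun δ hδ => ⟨-(δ/2), ?_, ?_⟩⟩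
  · rw [abs_neg, abs_of_pos (by linarith)]; linarith
  · ext z
    simp only [Set.mem_inter_iff, Set.mem_image, Set.mem_empty_iff_false, iff_false]
    rintro ⟨⟨w, hw, rfl⟩, hz⟩
    have h1 := hsep w hw _ hz
    have : f (w + -(δ/2) • ((f v)⁻¹ • v)) = f w - δ/2 := by
      simp only [map_add, map_smul, smul_eq_mul]
      field_simp
      ring
    linarith [this ▸ h1]
end

section
/- Let Ω be a nonempty convex subset of a real vector space X with core(Ω) ≠ ∅, and let x₀ ∈ X with x₀ ∉ core(Ω). Then x₀ is properly separated from Ω by a hyperplane: there exist a nonzero linear function f : X → ℝ and a point w ∈ Ω such that f(x) ≤ f(x₀) for all x ∈ Ω and f(w) < f(x₀). -/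
open Pointwise Set

/-- a point outside the core of a nonempty core-solid convex set is
properly separated from the set by a hyperplane. -/
theorem proper_separation_of_notMem_core {X : Type*} [AddCommGroup X] [Module ℝ X]
    {Ω : Set X} (hne : Ω.Nonempty) (hconv : Convex ℝ Ω)
    (hsolid : (algCore Ω).Nonempty) (x₀ : X) (hx₀ : x₀ ∉ algCore Ω) :
    ∃ f : X →ₗ[ℝ] ℝ, f ≠ 0 ∧ (∀ x ∈ Ω, f x ≤ f x₀) ∧ ∃ w ∈ Ω, f w < f x₀ := by
  obtain ⟨a, haΩ, hacore⟩ := hsolid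
  -- translate so that `a` becomes `0`
  set S : Set X := {x | x + a ∈ Ω} with hS
  have hmem : ∀ x, x ∈ S ↔ x + a ∈ Ω := fun x => Iff.rfl
  have h0S : (0 : X) ∈ S := by simpa [hS] using haΩ
  have hSconv : Convex ℝ S := by
    intro x hx y hy s t hs ht hst
    have : s • (x + a) + t • (y + a) ∈ Ω := hconv hx hy hs ht hst
    have heq : s • (x + a) + t • (y + a) = s • x + t • y + a := by
      rw [smul_add, smul_add]
      rw [show s • x + s • a + (t • y + t • a) = s • x + t • y + (s • a + t • a) by abel,
        ← add_smul, hst, one_smul]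
    rwa [heq] at this
  -- `0` is in the core of `S`
  have h0core : ∀ v : X, ∃ δ : ℝ, 0 < δ ∧ ∀ t : ℝ, |t| < δ → t • v ∈ S := by
    intro v
    obtain ⟨δ, hδ, hδ'⟩ := hacore v
    exact ⟨δ, hδ, fun t ht => by simpa [hS, add_comm] using hδ' t ht⟩
  -- `S` is absorbent
  have habs : Absorbent ℝ S := by
    intro v
    obtain ⟨δ, hδ, hδ'⟩ := h0core v
    rw [absorbs_iff_norm]
    refine ⟨2 / δ, fun c hc => ?_⟩
    have hc2 : 0 < ‖c‖ := lt_of_lt_of_le (by positivity) hc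
    have hc0 : c ≠ 0 := by simpa using hc2.ne'
    have h1 : |c⁻¹| < δ := by
      rw [abs_inv, ← Real.norm_eq_abs]
      rw [inv_lt_comm₀ hc2 hδ]
      calc δ⁻¹ < 2 / δ := by rw [div_eq_mul_inv]; nlinarith [inv_pos.2 hδ]
        _ ≤ ‖c‖ := hc
    have h2 := hδ' c⁻¹ h1
    refine Set.singleton_subset_iff.2 ⟨c⁻¹ • v, h2, ?_⟩
    show c • c⁻¹ • v = v
    rw [smul_smul, mul_inv_cancel₀ hc0, one_smul]
  set z : X := x₀ - a with hz
  have hz0 : z ≠ 0 := by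
    intro h
    apply hx₀
    have : x₀ = a := by rwa [hz, sub_eq_zero] at h
    exact this ▸ ⟨haΩ, hacore⟩
  -- `z` is not in the core of `S`
  have hznotcore : ¬ (z ∈ S ∧ ∀ v : X, ∃ δ : ℝ, 0 < δ ∧ ∀ t : ℝ, |t| < δ → z + t • v ∈ S) := by
    rintro ⟨hzS, hzc⟩
    apply hx₀
    refine ⟨by simpa [hS, hz] using hzS, fun v => ?_⟩
    obtain ⟨δ, hδ, hδ'⟩ := hzc v
    refine ⟨δ, hδ, fun t ht => ?_⟩
    have := hδ' t ht
    simpa [hS, hz, sub_add_cancel, add_right_comm] using this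
  -- gauge of `z` is at least 1
  have hgz : 1 ≤ gauge S z := by
    by_contra h
    push_neg at h
    obtain ⟨r, hr0, hr1, y, hyS, hyz⟩ := exists_lt_of_gauge_lt habs h
    replace hyz : r • y = z := hyz
    apply hznotcore
    constructor
    · have := hSconv hyS h0S (a := r) (b := 1 - r) (le_of_lt hr0) (by linarith) (by ring)
      rw [smul_zero, add_zero, hyz] at this
      exact this
    · intro v
      obtain ⟨δ, hδ, hδ'⟩ := h0core ((1 - r)⁻¹ • v)
      have h1r : (0:ℝ) < 1 - r := by linarith
      refine ⟨δ, hδ, fun t ht => ?_⟩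
      have hin : t • ((1 - r)⁻¹ • v) ∈ S := hδ' _ ht
      have := hSconv hyS hin (a := r) (b := 1 - r) (le_of_lt hr0) (le_of_lt h1r) (by ring)
      have heq : r • y + (1 - r) • (t • (1 - r)⁻¹ • v) = z + t • v := by
        rw [← hyz]
        congr 1
        rw [smul_smul, smul_smul]
        congr 1
        field_simp
      rwa [heq] at this
  -- Hahn–Banach extension of `c • z ↦ c`
  have hgauge_smul : ∀ c : ℝ, 0 < c → ∀ x : X, gauge S (c • x) = c * gauge S x := by
    intro c hc x
    rw [gauge_smul_of_nonneg hc.le, smul_eq_mul]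
  have hbound : ∀ x : (LinearPMap.mkSpanSingleton (K := ℝ) (σ := RingHom.id ℝ) z (1:ℝ) hz0).domain,
      (LinearPMap.mkSpanSingleton (K := ℝ) (σ := RingHom.id ℝ) z (1:ℝ) hz0) x ≤ gauge S (x : X) := by
    rintro ⟨x, hx⟩
    obtain ⟨c, rfl⟩ := Submodule.mem_span_singleton.1 hx
    have happ : (LinearPMap.mkSpanSingleton (σ := RingHom.id ℝ) z (1:ℝ) hz0) ⟨c • z, hx⟩ = c • (1:ℝ) :=
      LinearPMap.mkSpanSingleton'_apply _ _ _ _ _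
    rw [happ, smul_eq_mul, mul_one]
    rcases le_or_gt 0 c with hc | hc
    · calc c = c * 1 := (mul_one c).symm
        _ ≤ c * gauge S z := by nlinarith
        _ = gauge S (c • z) := by rw [gauge_smul_of_nonneg hc, smul_eq_mul]
    · exact hc.le.trans (gauge_nonneg _)
  obtain ⟨f, hfeq, hfle⟩ := exists_extension_of_le_sublinear
    (LinearPMap.mkSpanSingleton z (1:ℝ) hz0) (gauge S)
    hgauge_smul (gauge_add_le hSconv habs) hbound
  · have hfz : f z = 1 := by
      have := hfeq ⟨z, Submodule.mem_span_singleton_self z⟩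
      rwa [LinearPMap.mkSpanSingleton_apply] at this
    refine ⟨f, ?_, ?_, a, haΩ, ?_⟩
    · intro h
      rw [h] at hfz
      simpa using hfz
    · intro x hxΩ
      have hxS : x - a ∈ S := by simpa [hS, sub_add_cancel] using hxΩ
      have h1 : f (x - a) ≤ gauge S (x - a) := hfle _
      have h2 : gauge S (x - a) ≤ 1 := gauge_le_one_of_mem hxS
      have h3 : f (x - a) = f x - f a := by rw [map_sub]
      have h4 : f z = f x₀ - f a := by rw [hz, map_sub]
      linarith [hfz ▸ h4]
    · have h4 : f z = f x₀ - f a := by rw [hz, map_sub]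
      rw [hfz] at h4
      linarith
end

section
/- Let F₁, F₂ : X ⇒ Y be set-valued mappings between real vector spaces whose graphs are convex. Assume that the graph of F₁ is core-solid and that there exists x ∈ core(dom(F₁)) ∩ dom(F₂) with core(F₁(x)) ≠ ∅, where dom(F) := {x : F(x) ≠ ∅}. Then for every (x̄, ȳ) ∈ gph(F₁ + F₂), every pair (ȳ₁, ȳ₂) with ȳ = ȳ₁ + ȳ₂, ȳ₁ ∈ F₁(x̄), ȳ₂ ∈ F₂(x̄), and every linear function g : Y → ℝ, one has D*(F₁ + F₂)(x̄, ȳ)(g) = D*F₁(x̄, ȳ₁)(g) + D*F₂(x̄, ȳ₂)(g), where (F₁ + F₂)(x) := {y₁ + y₂ : y₁ ∈ F₁(x), y₂ ∈ F₂(x)}. -/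
open Pointwise Set

section Aux
variable {X Y : Type*} [AddCommGroup X] [Module ℝ X] [AddCommGroup Y] [Module ℝ Y]

lemma svGraph_combo {F : X → Set Y} (h : Convex ℝ (svGraph F)) {a b : ℝ}
    (ha : 0 ≤ a) (hb : 0 ≤ b) (hab : a + b = 1) {x x' : X} {y y' : Y}
    (hy : y ∈ F x) (hy' : y' ∈ F x') : a • y + b • y' ∈ F (a • x + b • x') := by
  have := h (show (x, y) ∈ svGraph F from hy) (show (x', y') ∈ svGraph F from hy') ha hb hab
  exact this

def sumAuxSet (F₁ F₂ : X → Set Y) (xbar : X) (y₁b y₂b : Y) (g : Y →ₗ[ℝ] ℝ)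
    (f : X →ₗ[ℝ] ℝ) (v : X) : Set ℝ :=
  {r | ∃ t : ℝ, ∃ w : X, ∃ y₁ y₂ : Y, 0 < t ∧ y₁ ∈ F₁ (xbar + t • v + w) ∧
    y₂ ∈ F₂ (xbar + w) ∧ r = (g (y₁ - y₁b) + g (y₂ - y₂b) - f w) / t}

variable {F₁ F₂ : X → Set Y} {xbar : X} {y₁b y₂b : Y} {g : Y →ₗ[ℝ] ℝ} {f : X →ₗ[ℝ] ℝ}

lemma sumAuxSet_add (hconv₁ : Convex ℝ (svGraph F₁)) (hconv₂ : Convex ℝ (svGraph F₂))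
    {u v r s : _} (hr : r ∈ sumAuxSet F₁ F₂ xbar y₁b y₂b g f u)
    (hs : s ∈ sumAuxSet F₁ F₂ xbar y₁b y₂b g f v) :
    r + s ∈ sumAuxSet F₁ F₂ xbar y₁b y₂b g f (u + v) := by
  obtain ⟨t, w, y₁, y₂, ht, hy₁, hy₂, hrv⟩ := hr
  obtain ⟨t', w', y₁', y₂', ht', hy₁', hy₂', hsv⟩ := hs
  have hts : (0:ℝ) < t + t' := by linarith
  have hne : t + t' ≠ 0 := hts.ne'
  set a : ℝ := t' / (t + t') with ha
  set b : ℝ := t / (t + t') with hb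
  have ha0 : 0 ≤ a := by positivity
  have hb0 : 0 ≤ b := by positivity
  have hab : a + b = 1 := by rw [ha, hb, ← add_div, add_comm t' t, div_self hts.ne']
  set τ : ℝ := t * t' / (t + t') with hτ
  have hτ0 : 0 < τ := by positivity
  refine ⟨τ, a • w + b • w', a • y₁ + b • y₁', a • y₂ + b • y₂', hτ0, ?_, ?_, ?_⟩
  · have h1 := svGraph_combo hconv₁ ha0 hb0 hab hy₁ hy₁'
    have e1 : a • (xbar + t • u + w) + b • (xbar + t' • v + w')
        = xbar + τ • (u + v) + (a • w + b • w') := by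
      rw [ha, hb, hτ]
      match_scalars <;> field_simp <;> ring
    rwa [e1] at h1
  · have h2 := svGraph_combo hconv₂ ha0 hb0 hab hy₂ hy₂'
    have e2 : a • (xbar + w) + b • (xbar + w') = xbar + (a • w + b • w') := by
      rw [ha, hb]
      match_scalars <;> field_simp <;> ring
    rwa [e2] at h2
  · have ey1 : a • y₁ + b • y₁' - y₁b = a • (y₁ - y₁b) + b • (y₁' - y₁b) := by
      rw [ha, hb]
      match_scalars <;> field_simp <;> ring
    have ey2 : a • y₂ + b • y₂' - y₂b = a • (y₂ - y₂b) + b • (y₂' - y₂b) := by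
      rw [ha, hb]
      match_scalars <;> field_simp <;> ring
    rw [ey1, ey2, map_add, map_add, map_add, map_smul, map_smul, map_smul, map_smul,
      map_smul, map_smul]
    simp only [smul_eq_mul]
    have hnum : g (y₁ - y₁b) + g (y₂ - y₂b) - f w = t * r := by
      rw [hrv]; field_simp
    have hnum' : g (y₁' - y₁b) + g (y₂' - y₂b) - f w' = t' * s := by
      rw [hsv]; field_simp
    have : a * g (y₁ - y₁b) + b * g (y₁' - y₁b) + (a * g (y₂ - y₂b) + b * g (y₂' - y₂b))
        - (a * f w + b * f w') = a * (t * r) + b * (t' * s) := by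
      rw [← hnum, ← hnum']; ring
    rw [this, ha, hb, hτ]
    field_simp


lemma sumAuxSet_smul {c : ℝ} (hc : 0 < c) {v r : _}
    (hr : r ∈ sumAuxSet F₁ F₂ xbar y₁b y₂b g f v) :
    c * r ∈ sumAuxSet F₁ F₂ xbar y₁b y₂b g f (c • v) := by
  obtain ⟨t, w, y₁, y₂, ht, hy₁, hy₂, hrv⟩ := hr
  refine ⟨t / c, w, y₁, y₂, by positivity, ?_, hy₂, ?_⟩
  · rwa [smul_smul, div_mul_cancel₀ _ hc.ne']
  · rw [hrv]; field_simp

lemma sumAuxSet_nonempty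
    (hqc : ∃ x : X, x ∈ algCore (svDom F₁) ∧ x ∈ svDom F₂ ∧ (algCore (F₁ x)).Nonempty)
    (v : X) : (sumAuxSet F₁ F₂ xbar y₁b y₂b g f v).Nonempty := by
  obtain ⟨xs, ⟨-, hcore⟩, ⟨y₂s, hy₂s⟩, -⟩ := hqc
  obtain ⟨δ, hδ, hball⟩ := hcore v
  have ht : (0:ℝ) < δ / 2 := by linarith
  have hmem : xs + (δ / 2) • v ∈ svDom F₁ := hball (δ / 2) (by rw [abs_of_pos ht]; linarith)
  obtain ⟨y₁, hy₁⟩ := hmem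
  refine ⟨_, δ / 2, xs - xbar, y₁, y₂s, ht, ?_, ?_, rfl⟩
  · have e : xbar + (δ / 2) • v + (xs - xbar) = xs + (δ / 2) • v := by abel
    rwa [e]
  · have e : xbar + (xs - xbar) = xs := by abel
    rwa [e]

lemma sumAuxSet_zero_nonneg {ybar : Y}
    (hf : ∀ x : X, ∀ y ∈ F₁ x + F₂ x, f (x - xbar) - g (y - ybar) ≤ 0)
    (hsum : ybar = y₁b + y₂b) {r : ℝ}
    (hr : r ∈ sumAuxSet F₁ F₂ xbar y₁b y₂b g f 0) : 0 ≤ r := by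
  obtain ⟨t, w, y₁, y₂, ht, hy₁, hy₂, hrv⟩ := hr
  rw [smul_zero, add_zero] at hy₁
  have hmem : y₁ + y₂ ∈ F₁ (xbar + w) + F₂ (xbar + w) := Set.add_mem_add hy₁ hy₂
  have := hf (xbar + w) (y₁ + y₂) hmem
  have e1 : xbar + w - xbar = w := by abel
  have e2 : y₁ + y₂ - ybar = (y₁ - y₁b) + (y₂ - y₂b) := by rw [hsum]; abel
  rw [e1, e2, map_add] at this
  rw [hrv]
  apply div_nonneg (by linarith) ht.le

end Aux

/-- coderivative sum rule for convex set-valued mappings. -/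
theorem coderivative_sum_rule {X Y : Type*} [AddCommGroup X] [Module ℝ X]
    [AddCommGroup Y] [Module ℝ Y] (F₁ F₂ : X → Set Y)
    (hconv₁ : Convex ℝ (svGraph F₁)) (hconv₂ : Convex ℝ (svGraph F₂))
    (hsolid : (algCore (svGraph F₁)).Nonempty)
    (hqc : ∃ x : X, x ∈ algCore (svDom F₁) ∧ x ∈ svDom F₂ ∧ (algCore (F₁ x)).Nonempty)
    (xbar : X) (ybar : Y) (hxy : ybar ∈ F₁ xbar + F₂ xbar)
    (ybar₁ ybar₂ : Y) (h₁ : ybar₁ ∈ F₁ xbar) (h₂ : ybar₂ ∈ F₂ xbar)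
    (hsum : ybar = ybar₁ + ybar₂) (g : Y →ₗ[ℝ] ℝ) :
    coderiv (fun x => F₁ x + F₂ x) xbar ybar g =
      coderiv F₁ xbar ybar₁ g + coderiv F₂ xbar ybar₂ g := by
  ext f
  simp only [coderiv, Set.mem_setOf_eq]
  constructor
  · intro hf
    set S : X → Set ℝ := sumAuxSet F₁ F₂ xbar ybar₁ ybar₂ g f with hS
    have hne : ∀ v, (S v).Nonempty := fun v => sumAuxSet_nonempty hqc v
    have hpos : ∀ r ∈ S 0, 0 ≤ r := fun r hr => sumAuxSet_zero_nonneg hf hsum hr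
    have hbdd : ∀ v, BddBelow (S v) := by
      intro v
      obtain ⟨s₀, hs₀⟩ := hne (-v)
      refine ⟨-s₀, fun r hr => ?_⟩
      have h0 : r + s₀ ∈ S 0 := by
        have := sumAuxSet_add hconv₁ hconv₂ hr hs₀
        rwa [add_neg_cancel] at this
      linarith [hpos _ h0]
    set N : X → ℝ := fun v => sInf (S v) with hN
    have hNle : ∀ v, ∀ r ∈ S v, N v ≤ r := fun v r hr => csInf_le (hbdd v) hr
    have N_add : ∀ u v, N (u + v) ≤ N u + N v := by
      intro u v
      have key : ∀ r ∈ S u, ∀ s ∈ S v, N (u + v) ≤ r + s := fun r hr s hs =>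
        hNle _ _ (sumAuxSet_add hconv₁ hconv₂ hr hs)
      have h1 : ∀ s ∈ S v, N (u + v) - s ≤ N u := fun s hs =>
        le_csInf (hne u) (fun r hr => by linarith [key r hr s hs])
      have h2 : N (u + v) - N u ≤ N v :=
        le_csInf (hne v) (fun s hs => by linarith [h1 s hs])
      linarith
    have N_hom_le : ∀ c : ℝ, 0 < c → ∀ x, N (c • x) ≤ c * N x := by
      intro c hc x
      have h1 : N (c • x) / c ≤ N x :=
        le_csInf (hne x) (fun r hr => by
          rw [div_le_iff₀ hc]
          have := hNle _ _ (sumAuxSet_smul hc hr)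
          linarith)
      rw [div_le_iff₀ hc] at h1
      linarith
    have N_hom : ∀ c : ℝ, 0 < c → ∀ x, N (c • x) = c * N x := by
      intro c hc x
      refine le_antisymm (N_hom_le c hc x) ?_
      have h2 := N_hom_le c⁻¹ (by positivity) (c • x)
      rw [inv_smul_smul₀ hc.ne'] at h2
      have h3 := mul_le_mul_of_nonneg_left h2 hc.le
      rw [← mul_assoc, mul_inv_cancel₀ hc.ne', one_mul] at h3
      exact h3
    have hN0 : 0 ≤ N 0 := le_csInf (hne 0) hpos
    obtain ⟨f₁, -, hf₁le⟩ :=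
      exists_extension_of_le_sublinear ((0 : X →ₗ[ℝ] ℝ).toPMap ⊥) N N_hom N_add
        (by
          rintro ⟨x, hx⟩
          have hx0 : x = 0 := by simpa using hx
          simp only [LinearMap.toPMap_apply, LinearMap.zero_apply, hx0]
          exact hN0)
    rw [Set.mem_add]
    refine ⟨f₁, ?_, f - f₁, ?_, by abel⟩
    · intro x y₁ hy₁
      have hmem : g (y₁ - ybar₁) + g (ybar₂ - ybar₂) - f 0 ∈ S (x - xbar) := by
        refine ⟨1, 0, y₁, ybar₂, one_pos, ?_, ?_, by simp⟩
        · have e : xbar + (1 : ℝ) • (x - xbar) + 0 = x := by module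
          rwa [e]
        · rwa [add_zero]
      have h1 := (hf₁le (x - xbar)).trans (hNle _ _ hmem)
      simp only [sub_self, map_zero, add_zero, sub_zero] at h1
      linarith
    · intro x y₂ hy₂
      have hmem : g (ybar₁ - ybar₁) + g (y₂ - ybar₂) - f (x - xbar) ∈ S (xbar - x) := by
        refine ⟨1, x - xbar, ybar₁, y₂, one_pos, ?_, ?_, by simp⟩
        · have e : xbar + (1 : ℝ) • (xbar - x) + (x - xbar) = xbar := by module
          rwa [e]
        · have e : xbar + (x - xbar) = x := by abel
          rwa [e]
      have h1 := (hf₁le (xbar - x)).trans (hNle _ _ hmem)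
      have e : xbar - x = -(x - xbar) := by abel
      rw [e, map_neg] at h1
      simp only [sub_self, map_zero, zero_add] at h1
      simp only [LinearMap.sub_apply]
      linarith
  · intro hf
    rw [Set.mem_add] at hf
    obtain ⟨f₁, hf₁, f₂, hf₂, rfl⟩ := hf
    intro x y hy
    rw [Set.mem_add] at hy
    obtain ⟨y₁, hy₁, y₂, hy₂, rfl⟩ := hy
    have h1 := hf₁ x y₁ hy₁
    have h2 := hf₂ x y₂ hy₂
    have e : y₁ + y₂ - ybar = (y₁ - ybar₁) + (y₂ - ybar₂) := by rw [hsum]; abel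
    rw [LinearMap.add_apply, e, map_add]
    linarith
end

section
/- Let φ₁, φ₂ : X → ℝ ∪ {+∞} be proper convex functions on a real vector space X. Assume that the epigraph of φ₁ is core-solid and that core(dom(φ₁)) ∩ dom(φ₂) ≠ ∅. Then for each x̄ ∈ dom(φ₁) ∩ dom(φ₂) one has the subdifferential sum rule ∂(φ₁ + φ₂)(x̄) = ∂φ₁(x̄) + ∂φ₂(x̄). -/
open Pointwise Set

section Aux

variable {X : Type*} [AddCommGroup X] [Module ℝ X]

/-- Real-valued form of convexity, on the effective domain. -/
lemma convexFun_real (φ : X → EReal) (hb : ∀ y, φ y ≠ ⊥) (hc : ConvexFun φ)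
    (x y : X) (t : ℝ) (ht0 : 0 ≤ t) (ht1 : t ≤ 1) (hx : φ x ≠ ⊤) (hy : φ y ≠ ⊤) :
    φ (t • x + (1 - t) • y) ≠ ⊤ ∧
      (φ (t • x + (1 - t) • y)).toReal ≤ t * (φ x).toReal + (1 - t) * (φ y).toReal := by
  have hx' := EReal.coe_toReal hx (hb x)
  have hy' := EReal.coe_toReal hy (hb y)
  have h := hc x y t ht0 ht1
  rw [← hx', ← hy', ← EReal.coe_mul, ← EReal.coe_mul, ← EReal.coe_add] at h
  have hne : φ (t • x + (1 - t) • y) ≠ ⊤ := by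
    intro hT
    rw [hT] at h
    exact (EReal.coe_lt_top _).not_ge h
  refine ⟨hne, ?_⟩
  have h2 := EReal.toReal_le_toReal h (hb _) (EReal.coe_ne_top _)
  rwa [EReal.toReal_coe] at h2

/-- The hard half of the sum rule: splitting a subgradient of the sum. -/
lemma subdiff_sum_split (φ₁ φ₂ : X → EReal)
    (hbot₁ : ∀ x, φ₁ x ≠ ⊥) (hbot₂ : ∀ x, φ₂ x ≠ ⊥)
    (hconv₁ : ConvexFun φ₁) (hconv₂ : ConvexFun φ₂)
    (hqc : (algCore (fDom φ₁) ∩ fDom φ₂).Nonempty)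
    (xbar : X) (hxbar : xbar ∈ fDom φ₁ ∩ fDom φ₂)
    (f : X →ₗ[ℝ] ℝ) (hf : f ∈ subdiff (fun x => φ₁ x + φ₂ x) xbar) :
    ∃ g : X →ₗ[ℝ] ℝ, g ∈ subdiff φ₁ xbar ∧ f - g ∈ subdiff φ₂ xbar := by
  obtain ⟨h1bar, h2bar⟩ := hxbar
  have h1bar' : φ₁ xbar ≠ ⊤ := ne_of_lt h1bar
  have h2bar' : φ₂ xbar ≠ ⊤ := ne_of_lt h2bar
  set val : X → X → ℝ := fun u v =>
    (φ₁ (xbar + u)).toReal + (φ₂ (xbar + v)).toReal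
      - (φ₁ xbar).toReal - (φ₂ xbar).toReal - f v with hval_def
  -- base inequality from `f ∈ ∂(φ₁+φ₂)(xbar)`
  have hval0 : ∀ u : X, φ₁ (xbar + u) ≠ ⊤ → φ₂ (xbar + u) ≠ ⊤ → 0 ≤ val u u := by
    intro u h1 h2
    have h := hf (xbar + u)
    simp only [add_sub_cancel_left] at h
    rw [← EReal.coe_toReal h1bar' (hbot₁ xbar), ← EReal.coe_toReal h2bar' (hbot₂ xbar),
      ← EReal.coe_toReal h1 (hbot₁ _), ← EReal.coe_toReal h2 (hbot₂ _),
      ← EReal.coe_add, ← EReal.coe_add, ← EReal.coe_add, EReal.coe_le_coe_iff] at h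
    simp only [hval_def]
    linarith
  -- convex combination inequality for `val`
  have hcomb : ∀ (u v u' v' : X) (μ : ℝ), 0 ≤ μ → μ ≤ 1 →
      φ₁ (xbar + u) ≠ ⊤ → φ₂ (xbar + v) ≠ ⊤ → φ₁ (xbar + u') ≠ ⊤ → φ₂ (xbar + v') ≠ ⊤ →
      φ₁ (xbar + (μ • u + (1 - μ) • u')) ≠ ⊤ ∧ φ₂ (xbar + (μ • v + (1 - μ) • v')) ≠ ⊤ ∧
        val (μ • u + (1 - μ) • u') (μ • v + (1 - μ) • v')
          ≤ μ * val u v + (1 - μ) * val u' v' := by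
    intro u v u' v' μ hμ0 hμ1 h1 h2 h1' h2'
    have e1 : μ • (xbar + u) + (1 - μ) • (xbar + u') = xbar + (μ • u + (1 - μ) • u') := by
      module
    have e2 : μ • (xbar + v) + (1 - μ) • (xbar + v') = xbar + (μ • v + (1 - μ) • v') := by
      module
    have c1 := convexFun_real φ₁ hbot₁ hconv₁ (xbar + u) (xbar + u') μ hμ0 hμ1 h1 h1'
    have c2 := convexFun_real φ₂ hbot₂ hconv₂ (xbar + v) (xbar + v') μ hμ0 hμ1 h2 h2'
    rw [e1] at c1
    rw [e2] at c2
    have hfv : f (μ • v + (1 - μ) • v') = μ * f v + (1 - μ) * f v' := by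
      simp [map_add, map_smul, smul_eq_mul]
    refine ⟨c1.1, c2.1, ?_⟩
    simp only [hval_def, hfv]
    have hc1 := c1.2
    have hc2 := c2.2
    nlinarith [hc1, hc2]
  -- the family of approximating slope sets
  set A : X → Set ℝ := fun z => {c | ∃ t : ℝ, ∃ u v : X, 0 < t ∧ u - v = t • z ∧
    φ₁ (xbar + u) ≠ ⊤ ∧ φ₂ (xbar + v) ≠ ⊤ ∧ c = val u v / t} with hA_def
  obtain ⟨a, ha1, ha2⟩ := hqc
  have hAne : ∀ z : X, (A z).Nonempty := by
    intro z
    obtain ⟨δ, hδ, hδz⟩ := ha1.2 z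
    refine ⟨val (a - xbar + (δ / 2) • z) (a - xbar) / (δ / 2),
      δ / 2, a - xbar + (δ / 2) • z, a - xbar, by linarith, by abel, ?_, ?_, rfl⟩
    · have harg : xbar + (a - xbar + (δ / 2) • z) = a + (δ / 2) • z := by abel
      rw [harg]
      refine ne_of_lt (hδz (δ / 2) ?_)
      rw [abs_of_pos (by linarith)]
      linarith
    · have harg : xbar + (a - xbar) = a := by abel
      rw [harg]
      exact ne_of_lt ha2
  have hAadd : ∀ z w c d, c ∈ A z → d ∈ A w → ∃ e ∈ A (z + w), e ≤ c + d := by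
    rintro z w c d ⟨t, u, v, ht, huv, h1, h2, rfl⟩ ⟨s, u', v', hs, huv', h1', h2', rfl⟩
    set μ := s / (s + t) with hμ
    have hst : 0 < s + t := by linarith
    have hμ0 : 0 < μ := by positivity
    have hμ1 : μ ≤ 1 := by rw [hμ, div_le_one hst]; linarith
    have h1μ : 1 - μ = t / (s + t) := by rw [hμ]; field_simp; ring
    have h1μ0 : 0 < 1 - μ := by rw [h1μ]; positivity
    set τ := s * t / (s + t) with hτ
    have hτ0 : 0 < τ := by positivity
    have hμt : μ * t = τ := by rw [hμ, hτ]; ring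
    have hμs : (1 - μ) * s = τ := by rw [h1μ, hτ]; ring
    obtain ⟨hU, hV, hvalle⟩ := hcomb u v u' v' μ hμ0.le hμ1 h1 h2 h1' h2'
    refine ⟨val (μ • u + (1 - μ) • u') (μ • v + (1 - μ) • v') / τ,
      ⟨τ, _, _, hτ0, ?_, hU, hV, rfl⟩, ?_⟩
    · have hvec : (μ • u + (1 - μ) • u') - (μ • v + (1 - μ) • v')
          = μ • (u - v) + (1 - μ) • (u' - v') := by module
      rw [hvec, huv, huv', smul_smul, smul_smul, hμt, hμs, ← smul_add]
    · have e1 : val u v / t = μ * val u v / τ := by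
        rw [← hμt, mul_div_mul_left _ _ (ne_of_gt hμ0)]
      have e2 : val u' v' / s = (1 - μ) * val u' v' / τ := by
        rw [← hμs, mul_div_mul_left _ _ (ne_of_gt h1μ0)]
      rw [e1, e2, ← add_div, div_le_div_iff_of_pos_right hτ0]
      exact hvalle
  have hA0 : ∀ c ∈ A 0, 0 ≤ c := by
    rintro c ⟨t, u, v, ht, huv, h1, h2, rfl⟩
    rw [smul_zero, sub_eq_zero] at huv
    subst huv
    exact div_nonneg (hval0 u h1 h2) ht.le
  have hbdd : ∀ z : X, BddBelow (A z) := by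
    intro z
    obtain ⟨d, hd⟩ := hAne (-z)
    refine ⟨-d, fun c hc => ?_⟩
    obtain ⟨e, he, hle⟩ := hAadd z (-z) c d hc hd
    rw [add_neg_cancel] at he
    have := hA0 e he
    linarith
  set N : X → ℝ := fun z => sInf (A z) with hN
  have hNle : ∀ z c, c ∈ A z → N z ≤ c := fun z c hc => csInf_le (hbdd z) hc
  have hN0 : 0 ≤ N 0 := le_csInf (hAne 0) hA0
  have hNadd : ∀ z w, N (z + w) ≤ N z + N w := by
    intro z w
    have key : ∀ c ∈ A z, ∀ d ∈ A w, N (z + w) ≤ c + d := by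
      intro c hc d hd
      obtain ⟨e, he, hle⟩ := hAadd z w c d hc hd
      exact (hNle _ _ he).trans hle
    have h1 : ∀ c ∈ A z, N (z + w) - c ≤ N w :=
      fun c hc => le_csInf (hAne w) fun d hd => by linarith [key c hc d hd]
    have h2 : N (z + w) - N w ≤ N z :=
      le_csInf (hAne z) fun c hc => by linarith [h1 c hc]
    linarith
  have hNhom : ∀ r : ℝ, 0 < r → ∀ z, N (r • z) = r * N z := by
    intro r hr z
    have hset : A (r • z) = r • A z := by
      ext c
      constructor
      · rintro ⟨t, u, v, ht, huv, h1, h2, rfl⟩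
        refine Set.mem_smul_set.mpr ⟨val u v / (t * r), ⟨t * r, u, v, by positivity, ?_, h1, h2, rfl⟩, ?_⟩
        · rwa [smul_smul] at huv
        · rw [smul_eq_mul]
          field_simp
      · rintro ⟨y, ⟨t, u, v, ht, huv, h1, h2, rfl⟩, rfl⟩
        refine ⟨t / r, u, v, by positivity, ?_, h1, h2, ?_⟩
        · rw [huv, smul_smul, div_mul_cancel₀ _ (ne_of_gt hr)]
        · show r • (val u v / t) = val u v / (t / r)
          rw [smul_eq_mul]
          field_simp
    rw [hN]
    simp only []
    rw [hset, Real.sInf_smul_of_nonneg hr.le, smul_eq_mul]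
  obtain ⟨g, -, hg⟩ := exists_extension_of_le_sublinear ⟨⊥, 0⟩ N hNhom hNadd (fun x => by
    have hx0 : (x : X) = 0 := (Submodule.mem_bot ℝ).mp x.2
    show (0 : (⊥ : Submodule ℝ X) →ₗ[ℝ] ℝ) x ≤ N (x : X)
    rw [LinearMap.zero_apply, hx0]
    exact hN0)
  have hkey : ∀ u v : X, φ₁ (xbar + u) ≠ ⊤ → φ₂ (xbar + v) ≠ ⊤ → g (u - v) ≤ val u v := by
    intro u v h1 h2
    have hmem : val u v ∈ A (u - v) :=
      ⟨1, u, v, one_pos, (one_smul ℝ _).symm, h1, h2, (div_one _).symm⟩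
    exact (hg _).trans (hNle _ _ hmem)
  refine ⟨g, ?_, ?_⟩
  · intro x
    by_cases hx : φ₁ x = ⊤
    · rw [hx]; exact le_top
    · have e : xbar + (x - xbar) = x := by abel
      have h := hkey (x - xbar) 0 (by rwa [e]) (by rwa [add_zero])
      rw [sub_zero] at h
      simp only [hval_def, e, add_zero, map_zero] at h
      rw [← EReal.coe_toReal hx (hbot₁ x), ← EReal.coe_toReal h1bar' (hbot₁ xbar),
        ← EReal.coe_add, EReal.coe_le_coe_iff]
      linarith
  · intro x
    by_cases hx : φ₂ x = ⊤
    · rw [hx]; exact le_top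
    · have e : xbar + (x - xbar) = x := by abel
      have h := hkey 0 (x - xbar) (by rwa [add_zero]) (by rwa [e])
      rw [zero_sub, map_neg] at h
      simp only [hval_def, e, add_zero] at h
      rw [LinearMap.sub_apply, ← EReal.coe_toReal hx (hbot₂ x),
        ← EReal.coe_toReal h2bar' (hbot₂ xbar), ← EReal.coe_add, EReal.coe_le_coe_iff]
      linarith

end Aux

/-- subdifferential sum rule for proper convex functions. -/
theorem subdifferential_sum_rule {X : Type*} [AddCommGroup X] [Module ℝ X]
    (φ₁ φ₂ : X → EReal)
    (hbot₁ : ∀ x, φ₁ x ≠ ⊥) (hbot₂ : ∀ x, φ₂ x ≠ ⊥)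
    (hproper₁ : (fDom φ₁).Nonempty) (hproper₂ : (fDom φ₂).Nonempty)
    (hconv₁ : ConvexFun φ₁) (hconv₂ : ConvexFun φ₂)
    (hsolid : (algCore (epi φ₁)).Nonempty)
    (hqc : (algCore (fDom φ₁) ∩ fDom φ₂).Nonempty)
    (xbar : X) (hxbar : xbar ∈ fDom φ₁ ∩ fDom φ₂) :
    subdiff (fun x => φ₁ x + φ₂ x) xbar = subdiff φ₁ xbar + subdiff φ₂ xbar := by
  
  ext f
  constructor
  · intro hf
    obtain ⟨g, hg1, hg2⟩ :=
      subdiff_sum_split φ₁ φ₂ hbot₁ hbot₂ hconv₁ hconv₂ hqc xbar hxbar f hf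
    exact Set.mem_add.mpr ⟨g, hg1, f - g, hg2, by abel⟩
  · intro hf
    obtain ⟨f₁, h₁, f₂, h₂, rfl⟩ := Set.mem_add.mp hf
    intro x
    have a₁ := h₁ x
    have a₂ := h₂ x
    simp only [LinearMap.add_apply, EReal.coe_add]
    calc φ₁ xbar + φ₂ xbar + ((f₁ (x - xbar) : EReal) + (f₂ (x - xbar) : EReal))
        = (φ₁ xbar + (f₁ (x - xbar) : EReal)) + (φ₂ xbar + (f₂ (x - xbar) : EReal)) := by
          rw [add_add_add_comm]
      _ ≤ φ₁ x + φ₂ x := add_le_add a₁ a₂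
end

section
/- Let F : X ⇒ Y and G : Y ⇒ Z be set-valued mappings between real vector spaces whose graphs are convex. Assume that the graph of F is core-solid and that there exists x ∈ core(dom(F)) with core(F(x)) ∩ dom(G) ≠ ∅. Then for every (x̄, z̄) ∈ gph(G ∘ F), every ȳ ∈ F(x̄) ∩ G⁻¹(z̄), and every linear function h : Z → ℝ, one has D*(G ∘ F)(x̄, z̄)(h) = D*F(x̄, ȳ)(D*G(ȳ, z̄)(h)) := ∪{D*F(x̄, ȳ)(g) : g ∈ D*G(ȳ, z̄)(h)}, where (G ∘ F)(x) := ∪{G(y) : y ∈ F(x)}. -/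
open Pointwise Set

section Sep
variable {E : Type*} [AddCommGroup E] [Module ℝ E]

lemma absorbent_of_algCore_zero {D : Set E} (h : (0 : E) ∈ algCore D) : Absorbent ℝ D := by
  rw [absorbent_iff_eventually_nhdsNE_zero]
  intro x
  obtain ⟨-, h2⟩ := h
  obtain ⟨δ, hδ, hd⟩ := h2 x
  have hev : ∀ᶠ c : ℝ in nhds 0, c • x ∈ D := by
    filter_upwards [Metric.ball_mem_nhds (0 : ℝ) hδ] with c hc
    have := hd c (by simpa [Real.dist_eq] using hc)
    simpa using this
  exact hev.filter_mono nhdsWithin_le_nhds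

lemma alg_separation {A B : Set E} (hA : Convex ℝ A) (hB : Convex ℝ B)
    (hdisj : ∀ a ∈ A, a ∉ B) (hAc : (algCore A).Nonempty) (hBne : B.Nonempty) :
    ∃ (l : E →ₗ[ℝ] ℝ) (α : ℝ), (∀ a ∈ A, l a ≤ α) ∧ (∀ b ∈ B, α ≤ l b) ∧
      ∀ a ∈ algCore A, l a < α := by
  obtain ⟨a₀, ha₀⟩ := hAc
  obtain ⟨b₀, hb₀⟩ := hBne
  set c₀ : E := a₀ - b₀ with hc₀
  set D : Set E := {d | ∃ a ∈ A, ∃ b ∈ B, d = a - b - c₀} with hD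
  have hDconv : Convex ℝ D := by
    rintro d₁ ⟨a₁, ha₁, b₁, hb₁, rfl⟩ d₂ ⟨a₂, ha₂, b₂, hb₂, rfl⟩ s t hs ht hst
    refine ⟨s • a₁ + t • a₂, hA ha₁ ha₂ hs ht hst, s • b₁ + t • b₂, hB hb₁ hb₂ hs ht hst, ?_⟩
    have hc : s • c₀ + t • c₀ = c₀ := by rw [← add_smul, hst, one_smul]
    linear_combination (norm := module) -hc
  have hD0 : (0 : E) ∈ algCore D := by
    constructor
    · exact ⟨a₀, ha₀.1, b₀, hb₀, by rw [hc₀]; abel⟩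
    · intro v
      obtain ⟨δ, hδ, hcore⟩ := ha₀.2 v
      exact ⟨δ, hδ, fun t ht => ⟨a₀ + t • v, hcore t ht, b₀, hb₀, by rw [hc₀]; abel⟩⟩
  have habs : Absorbent ℝ D := absorbent_of_algCore_zero hD0
  have hd₀notD : -c₀ ∉ D := by
    rintro ⟨a, ha, b, hb, hab⟩
    have h2 : a - b = 0 := by linear_combination (norm := abel) -hab
    exact hdisj a ha (sub_eq_zero.mp h2 ▸ hb)
  have hd₀ne : (-c₀ : E) ≠ 0 := by
    intro h0
    have : a₀ = b₀ := by
      have : a₀ - b₀ = 0 := by simpa [hc₀] using neg_eq_zero.mp h0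
      exact sub_eq_zero.mp this
    exact hdisj a₀ ha₀.1 (this ▸ hb₀)
  set μ : ℝ := gauge D (-c₀) with hμdef
  have hμ1 : 1 ≤ μ := by
    by_contra hlt
    push_neg at hlt
    exact hd₀notD (gauge_lt_one_subset_self hDconv hD0.1 habs hlt)
  -- Hahn-Banach extension
  let fp : E →ₗ.[ℝ] ℝ := LinearPMap.mkSpanSingleton (-c₀) μ hd₀ne
  have hfle : ∀ x : fp.domain, fp x ≤ gauge D x := by
    rintro ⟨x, hx⟩
    obtain ⟨y, rfl⟩ := Submodule.mem_span_singleton.1 hx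
    rw [LinearPMap.mkSpanSingleton'_apply]
    simp only [smul_eq_mul]
    obtain hy | hy := le_or_gt y 0
    · exact (mul_nonpos_of_nonpos_of_nonneg hy (by linarith)).trans (gauge_nonneg _)
    · rw [gauge_smul_of_nonneg hy.le, smul_eq_mul, RingHom.id_apply]
  obtain ⟨φ, hφ₁, hφ₂⟩ := exists_extension_of_le_sublinear fp (gauge D)
    (fun c hc => gauge_smul_of_nonneg hc.le) (gauge_add_le hDconv habs) hfle
  have hφd₀ : φ (-c₀) = μ := by
    rw [← fp.domain.coe_mk (-c₀) (by exact Submodule.mem_span_singleton_self _), hφ₁]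
    exact LinearPMap.mkSpanSingleton'_apply_self _ _ _ _
  -- key inequality: for a ∈ A, b ∈ B, φ a ≤ φ b
  have hkey : ∀ a ∈ A, ∀ b ∈ B, φ a ≤ φ b := by
    intro a ha b hb
    have hmem : a - b - c₀ ∈ D := ⟨a, ha, b, hb, rfl⟩
    have h1 : φ (a - b - c₀) ≤ 1 := (hφ₂ _).trans (gauge_le_one_of_mem hmem)
    have h2 : φ (a - b - c₀) = φ a - φ b + φ (-c₀) := by
      rw [map_sub, map_sub, map_neg]
      ring
    rw [h2, hφd₀] at h1
    linarith
  set α : ℝ := sInf (φ '' B) with hα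
  have hbdd : BddBelow (φ '' B) := ⟨φ a₀, by rintro _ ⟨b, hb, rfl⟩; exact hkey a₀ ha₀.1 b hb⟩
  have hle : ∀ a ∈ A, φ a ≤ α :=
    fun a ha => le_csInf ⟨φ b₀, ⟨b₀, hb₀, rfl⟩⟩ (by rintro _ ⟨b, hb, rfl⟩; exact hkey a ha b hb)
  have hge : ∀ b ∈ B, α ≤ φ b := fun b hb => csInf_le hbdd ⟨b, hb, rfl⟩
  refine ⟨φ, α, hle, hge, ?_⟩
  intro a ha
  by_contra hcon
  push_neg at hcon
  have heq : φ a = α := le_antisymm (hle a ha.1) hcon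
  have hv : ∀ v : E, φ v = 0 := by
    intro v
    obtain ⟨δ, hδ, hcore⟩ := ha.2 v
    have h1 : φ a + (δ / 2) * φ v ≤ α := by
      have := hle _ (hcore (δ / 2) (by rw [abs_of_pos (by linarith)]; linarith))
      rwa [map_add, map_smul, smul_eq_mul] at this
    have h2 : φ a + (-(δ / 2)) * φ v ≤ α := by
      have := hle _ (hcore (-(δ / 2)) (by rw [abs_neg, abs_of_pos (by linarith)]; linarith))
      rwa [map_add, map_smul, smul_eq_mul] at this
    nlinarith
  have : (0 : ℝ) = μ := by rw [← hφd₀, hv]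
  linarith

end Sep

/-- coderivative chain rule for convex set-valued mappings under the
first core qualification condition. -/
theorem coderivative_chain_rule_qc1 {X Y Z : Type*} [AddCommGroup X] [Module ℝ X]
    [AddCommGroup Y] [Module ℝ Y] [AddCommGroup Z] [Module ℝ Z]
    (F : X → Set Y) (G : Y → Set Z)
    (hconvF : Convex ℝ (svGraph F)) (hconvG : Convex ℝ (svGraph G))
    (hsolid : (algCore (svGraph F)).Nonempty)
    (hqc : ∃ x : X, x ∈ algCore (svDom F) ∧ (algCore (F x) ∩ svDom G).Nonempty)
    (xbar : X) (zbar : Z) (hxz : zbar ∈ svComp G F xbar)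
    (ybar : Y) (hybar : ybar ∈ F xbar ∧ zbar ∈ G ybar) (h : Z →ₗ[ℝ] ℝ) :
    coderiv (svComp G F) xbar zbar h =
      ⋃ g ∈ coderiv G ybar zbar h, coderiv F xbar ybar g := by
  obtain ⟨hyF, hzG⟩ := hybar
  ext f
  constructor
  · intro hf
    have hf' : ∀ x : X, ∀ z ∈ svComp G F x, f (x - xbar) - h (z - zbar) ≤ 0 := hf
    -- the two convex sets in Y × ℝ
    set A : Set (Y × ℝ) := {p | ∃ x, p.1 ∈ F x ∧ p.2 < f (x - xbar)} with hAdef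
    set B : Set (Y × ℝ) := {p | ∃ z ∈ G p.1, h (z - zbar) ≤ p.2} with hBdef
    have hAconv : Convex ℝ A := by
      rintro ⟨y₁, r₁⟩ ⟨x₁, hx₁, hr₁⟩ ⟨y₂, r₂⟩ ⟨x₂, hx₂, hr₂⟩ s t hs ht hst
      refine ⟨s • x₁ + t • x₂, ?_, ?_⟩
      · have := hconvF (show ((x₁, y₁) : X × Y) ∈ svGraph F from hx₁)
          (show ((x₂, y₂) : X × Y) ∈ svGraph F from hx₂) hs ht hst
        simpa [svGraph, Prod.smul_mk, Prod.mk_add_mk] using this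
      · have hxx : s • x₁ + t • x₂ - xbar = s • (x₁ - xbar) + t • (x₂ - xbar) := by
          have h1 : (s + t) • xbar = xbar := by rw [hst, one_smul]
          linear_combination (norm := module) h1
        have hfx : f (s • x₁ + t • x₂ - xbar) = s * f (x₁ - xbar) + t * f (x₂ - xbar) := by
          rw [hxx, map_add, map_smul, map_smul, smul_eq_mul, smul_eq_mul]
        show s • r₁ + t • r₂ < f (s • x₁ + t • x₂ - xbar)
        rw [hfx, smul_eq_mul, smul_eq_mul]
        rcases hs.eq_or_lt with hs0 | hs'
        · have ht1 : t = 1 := by linarith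
          rw [← hs0, ht1]; simpa using hr₂
        · have h1 : s * r₁ < s * f (x₁ - xbar) := by nlinarith
          have h2 : t * r₂ ≤ t * f (x₂ - xbar) := by nlinarith
          linarith
    have hBconv : Convex ℝ B := by
      rintro ⟨y₁, r₁⟩ ⟨z₁, hz₁, hr₁⟩ ⟨y₂, r₂⟩ ⟨z₂, hz₂, hr₂⟩ s t hs ht hst
      refine ⟨s • z₁ + t • z₂, ?_, ?_⟩
      · have := hconvG (show ((y₁, z₁) : Y × Z) ∈ svGraph G from hz₁)
          (show ((y₂, z₂) : Y × Z) ∈ svGraph G from hz₂) hs ht hst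
        simpa [svGraph, Prod.smul_mk, Prod.mk_add_mk] using this
      · have hzz : s • z₁ + t • z₂ - zbar = s • (z₁ - zbar) + t • (z₂ - zbar) := by
          have h1 : (s + t) • zbar = zbar := by rw [hst, one_smul]
          linear_combination (norm := module) h1
        have hhz : h (s • z₁ + t • z₂ - zbar) = s * h (z₁ - zbar) + t * h (z₂ - zbar) := by
          rw [hzz, map_add, map_smul, map_smul, smul_eq_mul, smul_eq_mul]
        show h (s • z₁ + t • z₂ - zbar) ≤ s • r₁ + t • r₂
        rw [hhz, smul_eq_mul, smul_eq_mul]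
        have h1 : s * h (z₁ - zbar) ≤ s * r₁ := by nlinarith
        have h2 : t * h (z₂ - zbar) ≤ t * r₂ := by nlinarith
        linarith
    have hdisj : ∀ p ∈ A, p ∉ B := by
      rintro ⟨y, r⟩ ⟨x, hyx, hr⟩ ⟨z, hz, hrz⟩
      have hzc : z ∈ svComp G F x := Set.mem_biUnion hyx hz
      have := hf' x z hzc
      simp only at hr hrz
      linarith
    obtain ⟨⟨x₀, y₀⟩, hq⟩ := hsolid
    have hApt : ((y₀, f (x₀ - xbar) - 1) : Y × ℝ) ∈ algCore A := by
      refine ⟨⟨x₀, hq.1, by simp⟩, ?_⟩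
      rintro ⟨v, s⟩
      obtain ⟨δ₁, hδ₁, hc₁⟩ := hq.2 ((0 : X), v)
      refine ⟨min δ₁ (1 / (|s| + 1)), by positivity, ?_⟩
      intro t ht
      have ht1 : |t| < δ₁ := lt_of_lt_of_le ht (min_le_left _ _)
      have ht2 : |t| < 1 / (|s| + 1) := lt_of_lt_of_le ht (min_le_right _ _)
      have hmem := hc₁ t ht1
      refine ⟨x₀, ?_, ?_⟩
      · have h2 : ((x₀, y₀) + t • ((0 : X), v)).2 ∈ F ((x₀, y₀) + t • ((0 : X), v)).1 := hmem
        simpa using h2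
      · have habs : |t * s| < 1 := by
          rw [abs_mul]
          calc |t| * |s| ≤ |t| * (|s| + 1) := by nlinarith [abs_nonneg t, abs_nonneg s]
            _ < (1 / (|s| + 1)) * (|s| + 1) := by
                apply mul_lt_mul_of_pos_right ht2; positivity
            _ = 1 := by field_simp
        have hts : t * s < 1 := (abs_lt.mp habs).2
        show (f (x₀ - xbar) - 1) + t • s < f (x₀ - xbar)
        rw [smul_eq_mul]; linarith
    have hBne : B.Nonempty := ⟨(ybar, 0), ⟨zbar, hzG, by simp⟩⟩
    obtain ⟨l, α, hle, hge, hstrict⟩ :=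
      alg_separation hAconv hBconv hdisj ⟨_, hApt⟩ hBne
    obtain ⟨g₀, hg₀⟩ : ∃ g₀ : Y →ₗ[ℝ] ℝ, ∀ y : Y, g₀ y = l (y, 0) :=
      ⟨l ∘ₗ LinearMap.inl ℝ Y ℝ, fun y => rfl⟩
    obtain ⟨β, hβ⟩ : ∃ β : ℝ, β = l ((0 : Y), (1 : ℝ)) := ⟨_, rfl⟩
    have hkey : ∀ (y : Y) (r : ℝ), l (y, r) = g₀ y + r * β := by
      intro y r
      have hsplit : ((y, r) : Y × ℝ) = ((y, (0 : ℝ)) : Y × ℝ) + r • (((0 : Y), (1 : ℝ)) : Y × ℝ) := by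
        simp [Prod.ext_iff]
      rw [hsplit, map_add, map_smul, smul_eq_mul, hg₀, hβ]
    have hA' : ∀ (y : Y) (r : ℝ) (x : X), y ∈ F x → r < f (x - xbar) → g₀ y + r * β ≤ α := by
      intro y r x hyx hr
      have := hle (y, r) ⟨x, hyx, hr⟩
      rwa [hkey] at this
    have hB' : ∀ (y : Y) (z : Z), z ∈ G y → α ≤ g₀ y + h (z - zbar) * β := by
      intro y z hz
      have := hge (y, h (z - zbar)) ⟨z, hz, le_refl _⟩
      rwa [hkey] at this
    have hβ0 : 0 ≤ β := by
      by_contra hcon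
      push_neg at hcon
      set r' : ℝ := min (f (x₀ - xbar) - 1) ((α - g₀ y₀ + 1) / β) with hr'def
      have h1 : r' < f (x₀ - xbar) :=
        lt_of_le_of_lt (min_le_left _ _) (by linarith)
      have h2 := hA' y₀ r' x₀ hq.1 h1
      have h3 : r' ≤ (α - g₀ y₀ + 1) / β := min_le_right _ _
      have h5 : -β * r' ≤ -β * ((α - g₀ y₀ + 1) / β) :=
        mul_le_mul_of_nonneg_left h3 (by linarith)
      have hbne : β ≠ 0 := ne_of_lt hcon
      have h6 : -β * ((α - g₀ y₀ + 1) / β) = -(α - g₀ y₀ + 1) := by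
        field_simp
      rw [h6] at h5
      nlinarith
    have hβne : β ≠ 0 := by
      intro hβeq
      obtain ⟨xh, hxh, yh, hyhcore, hyhdom⟩ := hqc
      obtain ⟨zh, hzh⟩ := hyhdom
      have hαle : α ≤ g₀ yh := by
        have := hB' yh zh hzh; rw [hβeq] at this; simpa using this
      have hgyh : g₀ yh ≤ α := by
        have := hA' yh (f (xh - xbar) - 1) xh hyhcore.1 (by linarith)
        rw [hβeq] at this; simpa using this
      have hg0 : ∀ v : Y, g₀ v = 0 := by
        intro v
        obtain ⟨δ, hδ, hc⟩ := hyhcore.2 v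
        have hp : ∀ t : ℝ, |t| < δ → g₀ yh + t * g₀ v ≤ α := by
          intro t htd
          have := hA' (yh + t • v) (f (xh - xbar) - 1) xh (hc t htd) (by linarith)
          rw [hβeq] at this
          simp only [map_add, map_smul, smul_eq_mul, mul_zero, add_zero] at this
          linarith [this]
        have hp1 := hp (δ / 2) (by rw [abs_of_pos (by linarith)]; linarith)
        have hp2 := hp (-(δ / 2)) (by rw [abs_neg, abs_of_pos (by linarith)]; linarith)
        nlinarith
      have hstr := hstrict _ hApt
      rw [hkey, hβeq, hg0] at hstr
      simp only [mul_zero, add_zero, zero_add] at hstr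
      rw [hg0] at hαle
      linarith
    have hβpos : 0 < β := lt_of_le_of_ne hβ0 (Ne.symm hβne)
    -- limit: pass r → f (x - xbar)
    have hAineq : ∀ (x : X) (y : Y), y ∈ F x → g₀ y + f (x - xbar) * β ≤ α := by
      intro x y hy
      by_contra hcon
      push_neg at hcon
      set d : ℝ := g₀ y + f (x - xbar) * β - α with hddef
      have hd : 0 < d := by linarith
      set ε : ℝ := d / (2 * β) with hεdef
      have hεpos : 0 < ε := by positivity
      have hbne : β ≠ 0 := ne_of_gt hβpos
      have hεβ : ε * β = d / 2 := by
        rw [hεdef]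
        field_simp
      have := hA' y (f (x - xbar) - ε) x hy (by linarith)
      nlinarith
    have hα1 : g₀ ybar ≤ α := by
      have := hAineq xbar ybar hyF
      rw [sub_self, map_zero] at this
      simpa using this
    have hα2 : α ≤ g₀ ybar := by
      have := hB' ybar zbar hzG
      rw [sub_self, map_zero] at this
      simpa using this
    have hαeq : g₀ ybar = α := le_antisymm hα1 hα2
    obtain ⟨gh, hgh⟩ : ∃ gh : Y →ₗ[ℝ] ℝ, ∀ w : Y, gh w = -β⁻¹ * g₀ w :=
      ⟨(-β⁻¹) • g₀, fun w => rfl⟩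
    have hbne : β ≠ 0 := ne_of_gt hβpos
    have hghval : ∀ y : Y, gh (y - ybar) = (α - g₀ y) / β := by
      intro y
      rw [hgh, map_sub, hαeq]
      field_simp
      ring
    have hg_in : gh ∈ coderiv G ybar zbar h := by
      intro y z hz
      have hb := hB' y z hz
      rw [sub_nonpos, hghval, div_le_iff₀ hβpos]
      linarith
    have hf_in : f ∈ coderiv F xbar ybar gh := by
      intro x y hy
      have ha := hAineq x y hy
      rw [sub_nonpos, hghval, le_div_iff₀ hβpos]
      linarith
    exact mem_iUnion₂.mpr ⟨gh, hg_in, hf_in⟩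
  · intro hmem
    obtain ⟨g, hgS, hfT⟩ := mem_iUnion₂.mp hmem
    intro x z hz
    simp only [svComp, mem_iUnion] at hz
    obtain ⟨y, hyFx, hzGy⟩ := hz
    have h1 := hfT x y hyFx
    have h2 := hgS y z hzGy
    linarith
end

section
/- Let F : X ⇒ Y and G : Y ⇒ Z be set-valued mappings between real vector spaces whose graphs are convex. Assume that the graph of G is core-solid and that there exists (x, y) ∈ X × Y with y ∈ F(x) ∩ core(dom(G)) and core(G(y)) ≠ ∅. Then for every (x̄, z̄) ∈ gph(G ∘ F), every ȳ ∈ F(x̄) ∩ G⁻¹(z̄), and every linear function h : Z → ℝ, one has D*(G ∘ F)(x̄, z̄)(h) = D*F(x̄, ȳ)(D*G(ȳ, z̄)(h)) := ∪{D*F(x̄, ȳ)(g) : g ∈ D*G(ȳ, z̄)(h)}, where (G ∘ F)(x) := ∪{G(y) : y ∈ F(x)}. -/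
open Pointwise Set

section AuxChainRule

lemma seg_core {E : Type*} [AddCommGroup E] [Module ℝ E] {Ω : Set E} (hΩ : Convex ℝ Ω)
    {c q : E} (hc : c ∈ algCore Ω) (hq : q ∈ Ω) {θ : ℝ} (hθ0 : 0 < θ) (hθ1 : θ ≤ 1) :
    θ • c + (1 - θ) • q ∈ algCore Ω := by
  refine ⟨hΩ hc.1 hq (a := θ) (b := 1 - θ) hθ0.le (by linarith) (by ring), fun v => ?_⟩
  obtain ⟨δ, hδ, hmem⟩ := hc.2 v
  refine ⟨θ * δ, by positivity, fun t ht => ?_⟩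
  have h1 : |t / θ| < δ := by
    rw [abs_div, abs_of_pos hθ0, div_lt_iff₀ hθ0]
    calc |t| < θ * δ := ht
    _ = δ * θ := by ring
  have h2 := hΩ (hmem _ h1) hq (a := θ) (b := 1 - θ) hθ0.le (by linarith) (by ring)
  have h3 : θ • (c + (t / θ) • v) + (1 - θ) • q = θ • c + (1 - θ) • q + t • v := by
    match_scalars <;> field_simp
  rwa [h3] at h2

lemma algCore_mem_core {E : Type*} [AddCommGroup E] [Module ℝ E] {Ω : Set E} (hΩ : Convex ℝ Ω)
    {b : E} (hb : b ∈ algCore Ω) (v : E) :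
    ∃ δ : ℝ, 0 < δ ∧ ∀ t : ℝ, |t| < δ → b + t • v ∈ algCore Ω := by
  obtain ⟨δ, hδ, hmem⟩ := hb.2 v
  refine ⟨δ / 2, by positivity, fun t ht => ?_⟩
  have h2t : |2 * t| < δ := by rw [abs_mul]; rw [abs_two]; linarith
  have := seg_core hΩ hb (hmem (2*t) h2t) (θ := 1/2) (by norm_num) (by norm_num)
  have he : (1/2 : ℝ) • b + (1 - 1/2 : ℝ) • (b + (2*t) • v) = b + t • v := by
    match_scalars <;> ring
  rwa [he] at this

lemma core_of_beyond {E : Type*} [AddCommGroup E] [Module ℝ E] {Ω : Set E} (hΩ : Convex ℝ Ω)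
    {c p : E} (hc : c ∈ algCore Ω) {θ : ℝ} (hθ : 0 < θ) (hq : p + θ • (p - c) ∈ Ω) :
    p ∈ algCore Ω := by
  have h1 : (0:ℝ) < 1 + θ := by linarith
  have := seg_core hΩ hc hq (θ := θ / (1 + θ))
    (by positivity) (by rw [div_le_one h1]; linarith)
  have he : (θ / (1 + θ)) • c + (1 - θ / (1 + θ)) • (p + θ • (p - c)) = p := by
    match_scalars <;> (field_simp; try ring)
  rwa [he] at this

lemma alg_sep {E : Type*} [AddCommGroup E] [Module ℝ E] {C : Set E} (hC : Convex ℝ C)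
    (hne : C.Nonempty)
    (hopen : ∀ c ∈ C, ∀ v : E, ∃ δ : ℝ, 0 < δ ∧ ∀ t : ℝ, |t| < δ → c + t • v ∈ C)
    (h0 : (0:E) ∉ C) : ∃ ℓ : E →ₗ[ℝ] ℝ, ∀ c ∈ C, ℓ c < 0 := by
  obtain ⟨c₀, hc₀⟩ := hne
  set D : Set E := {x | c₀ + x ∈ C} with hD
  have hDconv : Convex ℝ D := by
    intro x hx y hy a b ha hb hab
    have h1 : a • (c₀ + x) + b • (c₀ + y) ∈ C := hC hx hy ha hb hab
    have h2 : a • (c₀ + x) + b • (c₀ + y) = c₀ + (a • x + b • y) := by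
      match_scalars <;> first | ring1 | linear_combination hab
    show c₀ + (a • x + b • y) ∈ C
    rwa [h2] at h1
  have hD0 : (0:E) ∈ D := by simpa [hD] using hc₀
  have hDopen : ∀ d ∈ D, ∀ v : E, ∃ δ : ℝ, 0 < δ ∧ ∀ t : ℝ, |t| < δ → d + t • v ∈ D := by
    intro d hd v
    obtain ⟨δ, hδ, hmem⟩ := hopen (c₀ + d) hd v
    exact ⟨δ, hδ, fun t ht => by simpa [hD, add_assoc] using hmem t ht⟩
  have habs : Absorbent ℝ D := by
    rw [absorbent_iff_eventually_nhdsNE_zero]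
    intro x
    obtain ⟨δ, hδ, hmem⟩ := hDopen 0 hD0 x
    have : ∀ᶠ c : ℝ in nhds 0, c • x ∈ D := by
      filter_upwards [Metric.ball_mem_nhds (0:ℝ) hδ] with c hc
      have := hmem c (by simpa [Real.dist_eq] using hc)
      simpa using this
    exact this.filter_mono nhdsWithin_le_nhds
  have hgauge_lt_one : ∀ d ∈ D, gauge D d < 1 := by
    intro d hd
    obtain ⟨δ, hδ, hmem⟩ := hDopen d hd d
    have htpos : 0 < δ/2 := by positivity
    have h1t : (0:ℝ) < 1 + δ/2 := by linarith
    have hmem' : (1 + δ/2) • d ∈ D := by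
      have := hmem (δ/2) (by rw [abs_of_pos htpos]; linarith)
      rw [add_smul, one_smul]; exact this
    have hd' : d ∈ (1 + δ/2)⁻¹ • D := by
      refine ⟨(1 + δ/2) • d, hmem', ?_⟩
      show (1 + δ/2)⁻¹ • ((1 + δ/2) • d) = d
      rw [smul_smul, inv_mul_cancel₀ h1t.ne', one_smul]
    calc gauge D d ≤ (1 + δ/2)⁻¹ := gauge_le_of_mem (by positivity) hd'
    _ < 1 := by rw [inv_lt_one_iff₀]; right; linarith
  have hx₀ne : -c₀ ≠ 0 := by
    intro hcon
    exact h0 (by simpa [show c₀ = 0 by simpa using congrArg Neg.neg hcon] using hc₀)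
  have hx₀notD : -c₀ ∉ D := fun hmem => h0 (by simpa [hD] using hmem)
  have hone_le : 1 ≤ gauge D (-c₀) := by
    by_contra hlt
    push_neg at hlt
    exact hx₀notD (gauge_lt_one_subset_self hDconv hD0 habs hlt)
  have hf_le : ∀ z : (LinearPMap.mkSpanSingleton (K := ℝ) (L := ℝ) (σ := RingHom.id ℝ) (-c₀) (gauge D (-c₀)) hx₀ne).domain,
      (LinearPMap.mkSpanSingleton (K := ℝ) (L := ℝ) (σ := RingHom.id ℝ) (-c₀) (gauge D (-c₀)) hx₀ne) z ≤ gauge D z := by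
    intro z
    obtain ⟨a, ha⟩ : ∃ a : ℝ, a • (-c₀) = (z : E) := by
      have hz : (z : E) ∈ Submodule.span ℝ {-c₀} := by
        exact (SetLike.ext_iff.mp (LinearPMap.domain_mkSpanSingleton _ _ _) _).mp z.2
      exact Submodule.mem_span_singleton.1 hz
    have hmem : a • (-c₀) ∈
        (LinearPMap.mkSpanSingleton (K := ℝ) (L := ℝ) (σ := RingHom.id ℝ) (-c₀) (gauge D (-c₀)) hx₀ne).domain := ha ▸ z.2
    have h1 : z = ⟨a • (-c₀), hmem⟩ := Subtype.ext ha.symm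
    rw [h1, LinearPMap.mkSpanSingleton'_apply]
    show a • gauge D (-c₀) ≤ gauge D (a • (-c₀))
    rcases le_or_gt 0 a with hA | hA
    · rw [gauge_smul_of_nonneg hA]
    · have : a • gauge D (-c₀) ≤ 0 := by
        rw [smul_eq_mul]
        exact mul_nonpos_of_nonpos_of_nonneg hA.le (by linarith)
      exact this.trans (gauge_nonneg _)
  obtain ⟨ℓ, hℓeq, hℓle⟩ := exists_extension_of_le_sublinear
    (LinearPMap.mkSpanSingleton (K := ℝ) (L := ℝ) (σ := RingHom.id ℝ) (-c₀) (gauge D (-c₀)) hx₀ne) (gauge D)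
    (fun c hc x => by rw [gauge_smul_of_nonneg hc.le]; simp)
    (gauge_add_le hDconv habs) hf_le
  have hℓx₀ : ℓ (-c₀) = gauge D (-c₀) := by
    have hmem : -c₀ ∈
        (LinearPMap.mkSpanSingleton (K := ℝ) (L := ℝ) (σ := RingHom.id ℝ) (-c₀) (gauge D (-c₀)) hx₀ne).domain := by
      rw [LinearPMap.domain_mkSpanSingleton]
      exact Submodule.mem_span_singleton_self _
    have h1 := hℓeq ⟨-c₀, hmem⟩
    have h2 : (LinearPMap.mkSpanSingleton (K := ℝ) (L := ℝ) (σ := RingHom.id ℝ) (-c₀) (gauge D (-c₀)) hx₀ne) ⟨-c₀, hmem⟩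
        = gauge D (-c₀) := LinearPMap.mkSpanSingleton_apply ℝ ℝ hx₀ne _
    rw [h2] at h1
    exact h1
  refine ⟨ℓ, fun c hc => ?_⟩
  have h1 : ℓ (c - c₀) < 1 := by
    have hcD : c - c₀ ∈ D := by show c₀ + (c - c₀) ∈ C; simpa using hc
    exact lt_of_le_of_lt (hℓle _) (hgauge_lt_one _ hcD)
  have h2 : ℓ c₀ ≤ -1 := by
    have : (1:ℝ) ≤ ℓ (-c₀) := hℓx₀ ▸ hone_le
    rw [map_neg] at this; linarith
  rw [map_sub] at h1
  linarith

lemma core_pair {Y Z : Type*} [AddCommGroup Y] [Module ℝ Y] [AddCommGroup Z] [Module ℝ Z]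
    {G : Y → Set Z} (hconvG : Convex ℝ (svGraph G)) {y₁ : Y} {z₁ : Z}
    (h₁ : (y₁, z₁) ∈ algCore (svGraph G)) {y : Y} {z₀ : Z}
    (hy : y ∈ algCore (svDom G)) (hz : z₀ ∈ algCore (G y)) :
    (y, z₀) ∈ algCore (svGraph G) := by
  obtain ⟨δ₁, hδ₁, hd⟩ := hy.2 (y - y₁)
  have hμpos : 0 < δ₁/2 := by positivity
  obtain ⟨ζ, hζ⟩ : (G (y + (δ₁/2) • (y - y₁))).Nonempty :=
    hd (δ₁/2) (by rw [abs_of_pos hμpos]; linarith)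
  set μ := δ₁/2 with hμ
  obtain ⟨δ₂, hδ₂, hw⟩ := hz.2 (z₀ + μ • (z₀ - z₁) - ζ)
  set lam := min (1/2 : ℝ) (δ₂/4) with hlam
  have hlam0 : 0 < lam := lt_min (by norm_num) (by positivity)
  have hlam_half : lam ≤ 1/2 := min_le_left _ _
  have h1lam : 0 < 1 - lam := by linarith
  set s := lam / (1 - lam) with hs
  have hs0 : 0 ≤ s := by positivity
  have hs_lt : |s| < δ₂ := by
    rw [abs_of_nonneg hs0, hs, div_lt_iff₀ h1lam]
    have : lam ≤ δ₂/4 := min_le_right _ _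
    nlinarith
  have hzs : z₀ + s • (z₀ + μ • (z₀ - z₁) - ζ) ∈ G y := hw s hs_lt
  have h1 : (1 - lam) * s = lam := by
    rw [hs]; field_simp
  have hcomb := hconvG (show ((y + μ • (y - y₁), ζ) : Y × Z) ∈ svGraph G from hζ)
    (show ((y, z₀ + s • (z₀ + μ • (z₀ - z₁) - ζ)) : Y × Z) ∈ svGraph G from hzs)
    (a := lam) (b := 1 - lam) hlam0.le (by linarith) (by ring)
  have hkey : lam • ((y + μ • (y - y₁), ζ) : Y × Z)
      + (1 - lam) • ((y, z₀ + s • (z₀ + μ • (z₀ - z₁) - ζ)) : Y × Z)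
      = (y, z₀) + (lam*μ) • ((y, z₀) - (y₁, z₁)) := by
    rw [Prod.ext_iff]
    constructor
    · show lam • (y + μ • (y - y₁)) + (1 - lam) • y = y + (lam*μ) • (y - y₁)
      module
    · show lam • ζ + (1 - lam) • (z₀ + s • (z₀ + μ • (z₀ - z₁) - ζ))
        = z₀ + (lam*μ) • (z₀ - z₁)
      have hinv : (1 - lam) * (1 - lam)⁻¹ = 1 := mul_inv_cancel₀ h1lam.ne'
      match_scalars <;>
        first
          | linear_combination (-lam) * hinv
          | linear_combination (lam + lam * δ₁ * (1/2)) * hinv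
          | linear_combination (lam * δ₁ * (1/2)) * hinv
          | linear_combination (-(lam * δ₁)) * hinv
          | linear_combination (-(lam * δ₁ * (1/2))) * hinv
  rw [hkey] at hcomb
  exact core_of_beyond hconvG h₁ (by positivity) hcomb

lemma coreB_mem {Y Z : Type*} [AddCommGroup Y] [Module ℝ Y] [AddCommGroup Z] [Module ℝ Z]
    {G : Y → Set Z} {y : Y} {z : Z} (hyz : (y, z) ∈ algCore (svGraph G))
    (h : Z →ₗ[ℝ] ℝ) (zbar : Z) :
    (y, h (z - zbar) + 1) ∈ algCore {p : Y × ℝ | ∃ w ∈ G p.1, h (w - zbar) ≤ p.2} := by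
  constructor
  · exact ⟨z, hyz.1, by show h (z - zbar) ≤ h (z - zbar) + 1; linarith⟩
  · rintro ⟨v, s⟩
    obtain ⟨δ, hδ, hmem⟩ := hyz.2 (v, 0)
    refine ⟨min δ (1/(|s|+1)), lt_min hδ (by positivity), fun t ht => ?_⟩
    have ht1 : |t| < δ := lt_of_lt_of_le ht (min_le_left _ _)
    have ht2 : |t| < 1/(|s|+1) := lt_of_lt_of_le ht (min_le_right _ _)
    have hG : z ∈ G (y + t • v) := by
      have := hmem t ht1
      simpa [svGraph, Prod.ext_iff] using this
    have hts : |t * s| < 1 := by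
      rw [abs_mul]
      rcases eq_or_lt_of_le (abs_nonneg s) with hs0 | hs0
      · rw [← hs0]; norm_num
      · calc |t| * |s| < (1/(|s|+1)) * |s| := by
              apply mul_lt_mul_of_pos_right ht2 hs0
        _ < 1 := by rw [div_mul_eq_mul_div, div_lt_one (by positivity)]; linarith
    have hneg : -1 < t * s := by
      rcases abs_lt.1 hts with ⟨hl, _⟩; linarith
    show ∃ w ∈ G ((y, h (z - zbar) + 1) + t • (v, s)).1,
      h (w - zbar) ≤ ((y, h (z - zbar) + 1) + t • (v, s)).2
    refine ⟨z, ?_, ?_⟩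
    · simpa using hG
    · simp only [Prod.smul_mk, Prod.mk_add_mk, Prod.snd, smul_eq_mul]
      linarith

end AuxChainRule

/-- coderivative chain rule for convex set-valued mappings under the
second core qualification condition. -/
theorem coderivative_chain_rule_qc2 {X Y Z : Type*} [AddCommGroup X] [Module ℝ X]
    [AddCommGroup Y] [Module ℝ Y] [AddCommGroup Z] [Module ℝ Z]
    (F : X → Set Y) (G : Y → Set Z)
    (hconvF : Convex ℝ (svGraph F)) (hconvG : Convex ℝ (svGraph G))
    (hsolid : (algCore (svGraph G)).Nonempty)
    (hqc : ∃ (x : X) (y : Y), y ∈ F x ∧ y ∈ algCore (svDom G) ∧ (algCore (G y)).Nonempty)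
    (xbar : X) (zbar : Z) (hxz : zbar ∈ svComp G F xbar)
    (ybar : Y) (hybar : ybar ∈ F xbar ∧ zbar ∈ G ybar) (h : Z →ₗ[ℝ] ℝ) :
    coderiv (svComp G F) xbar zbar h =
      ⋃ g ∈ coderiv G ybar zbar h, coderiv F xbar ybar g := by
  obtain ⟨hyF, hyG⟩ := hybar
  ext f
  simp only [Set.mem_iUnion, exists_prop]
  constructor
  · intro hf
    -- the hard inclusion
    set B : Set (Y × ℝ) := {p | ∃ w ∈ G p.1, h (w - zbar) ≤ p.2} with hBdef
    set A : Set (Y × ℝ) := {p | ∃ x, p.1 ∈ F x ∧ p.2 ≤ f (x - xbar)} with hAdef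
    have hBconv : Convex ℝ B := by
      rintro ⟨y₁, r₁⟩ ⟨w₁, hw₁, hr₁⟩ ⟨y₂, r₂⟩ ⟨w₂, hw₂, hr₂⟩ a b ha hb hab
      refine ⟨a • w₁ + b • w₂, ?_, ?_⟩
      · have := hconvG (show ((y₁, w₁) : Y × Z) ∈ svGraph G from hw₁)
          (show ((y₂, w₂) : Y × Z) ∈ svGraph G from hw₂) ha hb hab
        simpa [svGraph, Prod.smul_mk, Prod.mk_add_mk] using this
      · show h (a • w₁ + b • w₂ - zbar) ≤ (a • ((y₁, r₁) : Y × ℝ) + b • (y₂, r₂)).2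
        have e1 : a • w₁ + b • w₂ - zbar = a • (w₁ - zbar) + b • (w₂ - zbar) := by
          match_scalars <;> first | ring1 | linear_combination hab
        rw [e1, map_add, map_smul, map_smul]
        simp only [Prod.smul_mk, Prod.mk_add_mk, Prod.snd, smul_eq_mul]
        nlinarith [mul_le_mul_of_nonneg_left hr₁ ha, mul_le_mul_of_nonneg_left hr₂ hb]
    have hAconv : Convex ℝ A := by
      rintro ⟨y₁, r₁⟩ ⟨x₁, hx₁, hr₁⟩ ⟨y₂, r₂⟩ ⟨x₂, hx₂, hr₂⟩ a b ha hb hab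
      refine ⟨a • x₁ + b • x₂, ?_, ?_⟩
      · have := hconvF (show ((x₁, y₁) : X × Y) ∈ svGraph F from hx₁)
          (show ((x₂, y₂) : X × Y) ∈ svGraph F from hx₂) ha hb hab
        simpa [svGraph, Prod.smul_mk, Prod.mk_add_mk] using this
      · show (a • ((y₁, r₁) : Y × ℝ) + b • (y₂, r₂)).2 ≤ f (a • x₁ + b • x₂ - xbar)
        have e1 : a • x₁ + b • x₂ - xbar = a • (x₁ - xbar) + b • (x₂ - xbar) := by
          match_scalars <;> first | ring1 | linear_combination hab
        rw [e1, map_add, map_smul, map_smul]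
        simp only [Prod.smul_mk, Prod.mk_add_mk, Prod.snd, smul_eq_mul]
        nlinarith [mul_le_mul_of_nonneg_left hr₁ ha, mul_le_mul_of_nonneg_left hr₂ hb]
    have haA₀ : ((ybar, 0) : Y × ℝ) ∈ A := ⟨xbar, hyF, by simp⟩
    have hbB₀ : ((ybar, 0) : Y × ℝ) ∈ B := ⟨zbar, hyG, by simp⟩
    -- A does not meet the core of B
    have hANB : ∀ p ∈ A, p ∉ algCore B := by
      rintro ⟨y, r⟩ ⟨x, hxF, hrf⟩ hcore
      obtain ⟨δ, hδ, hmem⟩ := hcore.2 ((0 : Y), (-1 : ℝ))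
      have hδ2 : |δ/2| < δ := by rw [abs_of_pos (by positivity)]; linarith
      obtain ⟨z, hzG, hzr⟩ := hmem (δ/2) hδ2
      have hzG' : z ∈ G y := by
        have : ((y, r) + (δ/2) • ((0:Y), (-1:ℝ))).1 = y := by simp
        rwa [this] at hzG
      have hzr' : h (z - zbar) ≤ r - δ/2 := by
        have : ((y, r) + (δ/2) • ((0:Y), (-1:ℝ))).2 = r - δ/2 := by
          simp [Prod.smul_mk]; ring
        rwa [this] at hzr
      have hzc : z ∈ svComp G F x := Set.mem_biUnion hxF hzG'
      have := hf x z hzc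
      linarith
    -- the difference set
    set C : Set (Y × ℝ) := {p | ∃ b ∈ algCore B, ∃ a ∈ A, p = b - a} with hCdef
    have hcoreBconv : Convex ℝ (algCore B) := by
      intro p hp q hq a b ha hb hab
      rcases eq_or_lt_of_le ha with ha0 | ha0
      · have hb1 : b = 1 := by linarith
        rw [← ha0, hb1]; simpa using hq
      · have hb' : 1 - a = b := by linarith
        have := seg_core hBconv hp hq.1 ha0 (by linarith)
        rwa [hb'] at this
    have hCconv : Convex ℝ C := by
      rintro p ⟨b₁, hb₁, a₁, ha₁, rfl⟩ q ⟨b₂, hb₂, a₂, ha₂, rfl⟩ cc d hcc hd hccd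
      exact ⟨cc • b₁ + d • b₂, hcoreBconv hb₁ hb₂ hcc hd hccd,
        cc • a₁ + d • a₂, hAconv ha₁ ha₂ hcc hd hccd, by module⟩
    obtain ⟨p₁, hp₁⟩ := hsolid
    have hp₁' : ((p₁.1, p₁.2) : Y × Z) ∈ algCore (svGraph G) := by simpa using hp₁
    have hbB₁ : ((p₁.1 : Y), h (p₁.2 - zbar) + 1) ∈ algCore B := coreB_mem hp₁' h zbar
    have hCne : C.Nonempty := ⟨_, ⟨_, hbB₁, _, haA₀, rfl⟩⟩
    have hCopen : ∀ c ∈ C, ∀ v : Y × ℝ, ∃ δ : ℝ, 0 < δ ∧ ∀ t : ℝ, |t| < δ → c + t • v ∈ C := by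
      rintro p ⟨b, hb, a, ha, rfl⟩ v
      obtain ⟨δ, hδ, hmem⟩ := algCore_mem_core hBconv hb v
      exact ⟨δ, hδ, fun t ht => ⟨b + t • v, hmem t ht, a, ha, by abel⟩⟩
    have hC0 : (0 : Y × ℝ) ∉ C := by
      rintro ⟨b, hb, a, ha, h0⟩
      have hba : b = a := by
        have := h0.symm
        rwa [sub_eq_zero] at this
      exact hANB a ha (hba ▸ hb)
    obtain ⟨ℓ, hℓ⟩ := alg_sep hCconv hCne hCopen hC0
    have master : ∀ b ∈ algCore B, ∀ a ∈ A, ℓ b < ℓ a := by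
      intro b hb a ha
      have := hℓ _ ⟨b, hb, a, ha, rfl⟩
      rw [map_sub] at this
      linarith
    have weak : ∀ b ∈ B, ∀ a ∈ A, ℓ b ≤ ℓ a := by
      intro b hb a ha
      have hseq : ∀ t : ℝ, 0 < t → t ≤ 1 →
          t * ℓ (p₁.1, h (p₁.2 - zbar) + 1) + (1 - t) * ℓ b < ℓ a := by
        intro t h0 h1'
        have hmem := seg_core hBconv hbB₁ hb h0 h1'
        have := master _ hmem a ha
        rwa [map_add, map_smul, map_smul, smul_eq_mul, smul_eq_mul] at this
      set L0 := ℓ (p₁.1, h (p₁.2 - zbar) + 1) with hL0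
      by_contra hcon
      push_neg at hcon
      rcases le_or_gt (ℓ b) L0 with hc | hc
      · have := hseq (1/2) (by norm_num) (by norm_num)
        linarith
      · set t := min 1 ((ℓ b - ℓ a)/(2*(ℓ b - L0))) with htdef
        have ht0 : 0 < t := lt_min one_pos (div_pos (by linarith) (by linarith))
        have ht1 : t ≤ 1 := min_le_left _ _
        have h2 : t * (ℓ b - L0) ≤ (ℓ b - ℓ a)/2 := by
          have hle : t ≤ (ℓ b - ℓ a)/(2*(ℓ b - L0)) := min_le_right _ _
          calc t * (ℓ b - L0) ≤ ((ℓ b - ℓ a)/(2*(ℓ b - L0))) * (ℓ b - L0) :=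
                mul_le_mul_of_nonneg_right hle (by linarith)
          _ = (ℓ b - ℓ a)/2 := by
                have hkne : ℓ b - L0 ≠ 0 := sub_ne_zero.mpr hc.ne'
                field_simp
        have := hseq t ht0 ht1
        nlinarith
    -- decompose ℓ
    set gY : Y →ₗ[ℝ] ℝ := ℓ ∘ₗ LinearMap.inl ℝ Y ℝ with hgY
    set cst : ℝ := ℓ ((0 : Y), (1 : ℝ)) with hcst
    have hdecomp : ∀ (y : Y) (r : ℝ), ℓ (y, r) = gY y + r * cst := by
      intro y r
      have e : ((y, r) : Y × ℝ) = (y, 0) + r • ((0 : Y), (1 : ℝ)) := by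
        simp [Prod.ext_iff]
      rw [e, map_add, map_smul, smul_eq_mul, hcst]
      rfl
    -- cst < 0
    have hcle : cst ≤ 0 := by
      have h1B : ((ybar, 1) : Y × ℝ) ∈ B := ⟨zbar, hyG, by simp⟩
      have := weak _ h1B _ haA₀
      rw [hdecomp, hdecomp] at this
      linarith
    obtain ⟨xq, yq, hyqF, hyqdom, hGcore⟩ := hqc
    obtain ⟨zq, hzq⟩ := hGcore
    have hyzcore : (yq, zq) ∈ algCore (svGraph G) := core_pair hconvG hp₁' hyqdom hzq
    have hbq : ((yq : Y), h (zq - zbar) + 1) ∈ algCore B := coreB_mem hyzcore h zbar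
    have haq : ((yq : Y), f (xq - xbar)) ∈ A := ⟨xq, hyqF, le_refl _⟩
    have hstrict := master _ hbq _ haq
    rw [hdecomp, hdecomp] at hstrict
    have hcneg : cst < 0 := by
      rcases eq_or_lt_of_le hcle with hc0 | hc0
      · exfalso
        rw [hc0] at hstrict
        simp at hstrict
      · exact hc0
    set d : ℝ := -cst with hddef
    have hdpos : 0 < d := by rw [hddef]; linarith
    refine ⟨d⁻¹ • gY, ?_, ?_⟩
    · -- d⁻¹ • gY ∈ coderiv G ybar zbar h
      intro yy w hw
      have hbmem : ((yy, h (w - zbar)) : Y × ℝ) ∈ B := ⟨w, hw, le_refl _⟩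
      have hineq := weak _ hbmem _ haA₀
      rw [hdecomp, hdecomp] at hineq
      have key : gY yy - gY ybar ≤ d * h (w - zbar) := by
        rw [hddef]; nlinarith [hineq]
      have hdiv : d⁻¹ * (gY yy - gY ybar) ≤ h (w - zbar) := by
        have := mul_le_mul_of_nonneg_left key (inv_nonneg.mpr hdpos.le)
        rwa [← mul_assoc, inv_mul_cancel₀ hdpos.ne', one_mul] at this
      have happ : (d⁻¹ • gY) (yy - ybar) = d⁻¹ * (gY yy - gY ybar) := by
        rw [LinearMap.smul_apply, map_sub, smul_eq_mul]
      rw [happ]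
      linarith
    · -- f ∈ coderiv F xbar ybar (d⁻¹ • gY)
      intro x yy hyyF
      have hamem : ((yy, f (x - xbar)) : Y × ℝ) ∈ A := ⟨x, hyyF, le_refl _⟩
      have hineq := weak _ hbB₀ _ hamem
      rw [hdecomp, hdecomp] at hineq
      have key : d * f (x - xbar) ≤ gY yy - gY ybar := by
        rw [hddef]; nlinarith [hineq]
      have hdiv : f (x - xbar) ≤ d⁻¹ * (gY yy - gY ybar) := by
        have := mul_le_mul_of_nonneg_left key (inv_nonneg.mpr hdpos.le)
        rwa [← mul_assoc, inv_mul_cancel₀ hdpos.ne', one_mul] at this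
      have happ : (d⁻¹ • gY) (yy - ybar) = d⁻¹ * (gY yy - gY ybar) := by
        rw [LinearMap.smul_apply, map_sub, smul_eq_mul]
      rw [happ]
      linarith
  · -- the easy inclusion
    rintro ⟨g, hg, hfg⟩
    intro x z hz
    simp only [svComp, Set.mem_iUnion, exists_prop] at hz
    obtain ⟨y', hy', hzy'⟩ := hz
    have h1 := hfg x y' hy'
    have h2 := hg y' z hzy'
    linarith
end

section
/- Let A : X → Y be a linear operator between real vector spaces and let φ : Y → ℝ ∪ {+∞} be a proper convex function whose epigraph is core-solid. Assume that the range of A contains a point of core(dom(φ)). Then for any x̄ ∈ X with ȳ := A(x̄) ∈ dom(φ) one has the chain rule ∂(φ ∘ A)(x̄) = A*(∂φ(ȳ)) := {A*g : g ∈ ∂φ(ȳ)}, where A*g is the linear function on X defined by (A*g)(x) := g(Ax). -/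
open Pointwise Set

lemma convex_real {Y : Type*} [AddCommGroup Y] [Module ℝ Y] (φ : Y → EReal)
    (hbot : ∀ y, φ y ≠ ⊥) (hconv : ConvexFun φ) {y z : Y} (hy : φ y < ⊤) (hz : φ z < ⊤)
    {t : ℝ} (ht0 : 0 ≤ t) (ht1 : t ≤ 1) :
    φ (t • y + (1 - t) • z) < ⊤ ∧
      (φ (t • y + (1 - t) • z)).toReal ≤ t * (φ y).toReal + (1 - t) * (φ z).toReal := by
  have hy' : φ y = ((φ y).toReal : EReal) := (EReal.coe_toReal hy.ne (hbot y)).symm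
  have hz' : φ z = ((φ z).toReal : EReal) := (EReal.coe_toReal hz.ne (hbot z)).symm
  have h := hconv y z t ht0 ht1
  rw [hy', hz', ← EReal.coe_mul, ← EReal.coe_mul, ← EReal.coe_add] at h
  have hlt : φ (t • y + (1 - t) • z) < ⊤ := lt_of_le_of_lt h (EReal.coe_lt_top _)
  refine ⟨hlt, ?_⟩
  have h2 := EReal.toReal_le_toReal h (hbot _) (EReal.coe_ne_top _)
  simpa only [EReal.toReal_coe] using h2

lemma arith_key (t s c P P₁ P₂ F F' : ℝ) (ht : 0 < t) (hs : 0 < s) :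
    (P₁ - c - F) / t + (P₂ - c - F') / s
      - (P - c - (s / (t + s) * F + (1 - s / (t + s)) * F')) / (t * s / (t + s))
      = (s / (t + s) * P₁ + (1 - s / (t + s)) * P₂ - P) / (t * s / (t + s)) := by
  have hts : t + s ≠ 0 := by positivity
  field_simp
  ring

set_option maxHeartbeats 1000000 in
/-- subdifferential chain rule for the composition of a proper convex
function with a linear operator. -/
theorem subdifferential_chain_rule {X Y : Type*} [AddCommGroup X] [Module ℝ X]
    [AddCommGroup Y] [Module ℝ Y] (A : X →ₗ[ℝ] Y) (φ : Y → EReal)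
    (hbot : ∀ y, φ y ≠ ⊥) (hproper : (fDom φ).Nonempty) (hconv : ConvexFun φ)
    (hsolid : (algCore (epi φ)).Nonempty)
    (hrange : ∃ x : X, A x ∈ algCore (fDom φ))
    (xbar : X) (hxbar : A xbar ∈ fDom φ) :
    subdiff (fun x => φ (A x)) xbar =
      (fun g : Y →ₗ[ℝ] ℝ => g ∘ₗ A) '' subdiff φ (A xbar) := by
  ext f
  simp only [Set.mem_image]
  constructor
  · intro hf
    obtain ⟨x₀, hx₀mem, hx₀core⟩ := hrange
    set c : ℝ := (φ (A xbar)).toReal with hc_def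
    have hc : φ (A xbar) = (c : EReal) := (EReal.coe_toReal hxbar.ne (hbot _)).symm
    -- real form of the subgradient inequality
    have hK : ∀ x : X, A xbar + A x ∈ fDom φ → c + f x ≤ (φ (A xbar + A x)).toReal := by
      intro x hx
      have h := hf (xbar + x)
      simp only [map_add, add_sub_cancel_left] at h
      have hd : φ (A xbar + A x) = ((φ (A xbar + A x)).toReal : EReal) :=
        (EReal.coe_toReal hx.ne (hbot _)).symm
      rw [hc, hd] at h
      exact_mod_cast h
    -- the sublinear functional
    set S : Y → Set ℝ := fun v => { r | ∃ t : ℝ, 0 < t ∧ ∃ x : X,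
      A xbar + t • v + A x ∈ fDom φ ∧
      r = ((φ (A xbar + t • v + A x)).toReal - c - f x) / t } with hS_def
    have hSne : ∀ v : Y, (S v).Nonempty := by
      intro v
      obtain ⟨δ, hδ, hcore⟩ := hx₀core v
      have ht : (0:ℝ) < δ / 2 := by linarith
      have hmem : A x₀ + (δ / 2) • v ∈ fDom φ := by
        refine hcore (δ / 2) ?_
        rw [abs_of_pos ht]; linarith
      have heq : A xbar + (δ / 2) • v + A (x₀ - xbar) = A x₀ + (δ / 2) • v := by
        rw [map_sub]; abel
      exact ⟨_, δ / 2, ht, x₀ - xbar, by rw [heq]; exact hmem, rfl⟩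
    have hSbd : ∀ v : Y, BddBelow (S v) := by
      intro v
      obtain ⟨δ, hδ, hcore⟩ := hx₀core v
      set s : ℝ := δ / 2 with hs_def
      have hs : (0:ℝ) < s := by simp [hs_def]; linarith
      have hmem : A x₀ + (-s) • v ∈ fDom φ := by
        refine hcore (-s) ?_
        rw [abs_neg, abs_of_pos hs]; simp [hs_def]; linarith
      set M : ℝ := (φ (A x₀ + (-s) • v)).toReal with hM_def
      refine ⟨(f (x₀ - xbar) + c - M) / s, ?_⟩
      rintro r ⟨t, ht, x, hw, rfl⟩
      have hts : (0:ℝ) < t + s := by linarith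
      set lam : ℝ := t / (t + s) with hlam
      have hlam0 : (0:ℝ) ≤ lam := by positivity
      have hlam1 : lam ≤ 1 := by rw [hlam, div_le_one hts]; linarith
      have hcombo : lam • (A x₀ + (-s) • v) + (1 - lam) • (A xbar + t • v + A x)
          = A xbar + A (lam • (x₀ - xbar) + (1 - lam) • x) := by
        simp only [map_add, map_smul, map_sub, hlam]
        match_scalars <;> field_simp <;> ring
      obtain ⟨hDc, hIc⟩ := convex_real φ hbot hconv hmem hw hlam0 hlam1
      rw [hcombo] at hDc hIc
      have hKc := hK _ hDc
      rw [map_add, map_smul, map_smul, smul_eq_mul, smul_eq_mul] at hKc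
      rw [div_le_div_iff₀ hs ht, map_sub]
      have hcomb : lam * f (x₀ - xbar) + (1 - lam) * f x + c ≤ lam * M + (1 - lam)
          * (φ (A xbar + t • v + A x)).toReal := by linarith
      rw [hlam] at hcomb
      have h2 := mul_le_mul_of_nonneg_left hcomb hts.le
      field_simp at h2
      rw [map_sub] at h2
      nlinarith [h2]
    set p : Y → ℝ := fun v => sInf (S v) with hp_def
    have hp0 : 0 ≤ p 0 := by
      refine le_csInf (hSne 0) ?_
      rintro r ⟨t, ht, x, hw, rfl⟩
      simp only [smul_zero, add_zero] at hw ⊢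
      have h1 := hK x hw
      have h2 : 0 ≤ (φ (A xbar + A x)).toReal - c - f x := by linarith
      exact div_nonneg h2 ht.le
    have hphom : ∀ a : ℝ, 0 < a → ∀ v : Y, p (a • v) = a * p v := by
      intro a ha v
      have hset : S (a • v) = a • S v := by
        ext r
        constructor
        · rintro ⟨t, ht, x, hw, rfl⟩
          refine ⟨((φ (A xbar + t • (a • v) + A x)).toReal - c - f x) / (t * a), ?_, ?_⟩
          · refine ⟨t * a, by positivity, x, ?_, ?_⟩
            · rw [mul_smul]; exact hw
            · rw [mul_smul]
          · simp only [smul_eq_mul]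
            field_simp
        · rintro ⟨r', ⟨t, ht, x, hw, rfl⟩, rfl⟩
          refine ⟨t / a, by positivity, x, ?_, ?_⟩
          · have : (t / a) • (a • v) = t • v := by
              rw [smul_smul]; congr 1; field_simp
            rw [this]; exact hw
          · have h3 : (t / a) • (a • v) = t • v := by
              rw [smul_smul]; congr 1; field_simp
            rw [h3]
            simp only [smul_eq_mul]
            field_simp
      show sInf (S (a • v)) = a * sInf (S v)
      rw [hset, Real.sInf_smul_of_nonneg ha.le, smul_eq_mul]
    have hpadd : ∀ v w : Y, p (v + w) ≤ p v + p w := by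
      have key : ∀ v w : Y, ∀ r₁ ∈ S v, ∀ r₂ ∈ S w, p (v + w) ≤ r₁ + r₂ := by
        rintro v w r₁ ⟨t, ht, x, hw₁, rfl⟩ r₂ ⟨s, hst, x', hw₂, rfl⟩
        have hts : (0:ℝ) < t + s := by linarith
        set mu : ℝ := s / (t + s) with hmu
        have hmu0 : (0:ℝ) ≤ mu := by positivity
        have hmu1 : mu ≤ 1 := by rw [hmu, div_le_one hts]; linarith
        set tau : ℝ := t * s / (t + s) with htau
        have htau0 : (0:ℝ) < tau := by positivity
        have hcombo : mu • (A xbar + t • v + A x) + (1 - mu) • (A xbar + s • w + A x') =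
            A xbar + tau • (v + w) + A (mu • x + (1 - mu) • x') := by
          simp only [map_add, map_smul, hmu, htau, smul_add]
          match_scalars <;> field_simp <;> ring
        obtain ⟨hDc, hIc⟩ := convex_real φ hbot hconv hw₁ hw₂ hmu0 hmu1
        rw [hcombo] at hDc hIc
        have hmem : ((φ (A xbar + tau • (v + w) + A (mu • x + (1 - mu) • x'))).toReal - c
            - f (mu • x + (1 - mu) • x')) / tau ∈ S (v + w) :=
          ⟨tau, htau0, mu • x + (1 - mu) • x', hDc, rfl⟩
        refine (csInf_le (hSbd _) hmem).trans ?_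
        have hfx : f (mu • x + (1 - mu) • x') = mu * f x + (1 - mu) * f x' := by
          simp [map_add, map_smul, smul_eq_mul]
        rw [hfx]
        obtain ⟨P, hP⟩ : ∃ P, (φ (A xbar + tau • (v + w) + A (mu • x + (1 - mu) • x'))).toReal = P :=
          ⟨_, rfl⟩
        obtain ⟨P₁, hP1⟩ : ∃ P₁, (φ (A xbar + t • v + A x)).toReal = P₁ := ⟨_, rfl⟩
        obtain ⟨P₂, hP2⟩ : ∃ P₂, (φ (A xbar + s • w + A x')).toReal = P₂ := ⟨_, rfl⟩
        rw [hP, hP1, hP2]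
        rw [hP, hP1, hP2] at hIc
        have hnum : 0 ≤ (mu * P₁ + (1 - mu) * P₂ - P) / tau :=
          div_nonneg (by linarith) htau0.le
        have e := arith_key t s c P P₁ P₂ (f x) (f x') ht hst
        rw [← hmu, ← htau] at e
        linarith
      intro v w
      have h5 : ∀ r₁ ∈ S v, p (v + w) - r₁ ≤ p w := by
        intro r₁ hr₁
        refine le_csInf (hSne w) fun r₂ hr₂ => ?_
        have := key v w r₁ hr₁ r₂ hr₂
        linarith
      have h6 : p (v + w) - p w ≤ p v := by
        refine le_csInf (hSne v) fun r₁ hr₁ => ?_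
        have := h5 r₁ hr₁
        linarith
      linarith
    obtain ⟨g, -, hg_le⟩ := exists_extension_of_le_sublinear
      (⟨⊥, 0⟩ : Y →ₗ.[ℝ] ℝ) p hphom hpadd (by
        rintro ⟨x, hx⟩
        have hx0 : x = 0 := by simpa using hx
        subst hx0
        simpa using hp0)
    have hgA : ∀ x : X, g (A x) ≤ f x := by
      intro x
      have hmem : f x ∈ S (A x) := by
        refine ⟨1, one_pos, -x, ?_, ?_⟩
        · have : A xbar + (1:ℝ) • A x + A (-x) = A xbar := by
            rw [one_smul, map_neg]; abel
          rw [this]; exact hxbar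
        · have h7 : A xbar + (1:ℝ) • A x + A (-x) = A xbar := by
            rw [one_smul, map_neg]; abel
          rw [h7, map_neg]
          simp [hc_def]
      exact (hg_le _).trans (csInf_le (hSbd _) hmem)
    have hgA' : ∀ x : X, g (A x) = f x := by
      intro x
      refine le_antisymm (hgA x) ?_
      have := hgA (-x)
      simp only [map_neg] at this
      linarith
    refine ⟨g, ?_, ?_⟩
    · intro y
      by_cases hy : φ y < ⊤
      · have hmem : (φ y).toReal - c ∈ S (y - A xbar) := by
          refine ⟨1, one_pos, 0, ?_, ?_⟩
          · have h8 : A xbar + (1:ℝ) • (y - A xbar) + A 0 = y := by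
              rw [one_smul, map_zero]; abel
            rw [h8]; exact hy
          · have h8 : A xbar + (1:ℝ) • (y - A xbar) + A 0 = y := by
              rw [one_smul, map_zero]; abel
            rw [h8, map_zero]
            simp
        have h9 : g (y - A xbar) ≤ (φ y).toReal - c :=
          (hg_le _).trans (csInf_le (hSbd _) hmem)
        have hyc : φ y = ((φ y).toReal : EReal) := (EReal.coe_toReal hy.ne (hbot _)).symm
        rw [hc, hyc]
        have : c + g (y - A xbar) ≤ (φ y).toReal := by linarith
        exact_mod_cast this
      · rw [not_lt, top_le_iff] at hy
        rw [hy]; exact le_top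
    · ext x
      simp [hgA' x]
  · rintro ⟨g, hg, rfl⟩
    intro x
    have h := hg (A x)
    simpa [map_sub] using h
end

section
/- Let φ : X × Y → ℝ ∪ {+∞} be a convex function and F : X ⇒ Y a set-valued mapping with convex graph between real vector spaces, and let μ(x) := inf{φ(x, y) : y ∈ F(x)} be the associated marginal (optimal value) function. Assume μ(x) > −∞ for all x ∈ X, fix x̄ ∈ dom(μ), assume S(x̄) := {ȳ ∈ F(x̄) : μ(x̄) = φ(x̄, ȳ)} ≠ ∅, and assume the qualification condition: core(epi(φ)) ≠ ∅ and core(dom(φ)) ∩ gph(F) ≠ ∅. Then for any ȳ ∈ S(x̄) one has ∂μ(x̄) = ∪{f + D*F(x̄, ȳ)(g) : (f, g) ∈ ∂φ(x̄, ȳ)}, where a pair (f, g) of linear functions on X and Y is identified with the linear function (x, y) ↦ f(x) + g(y) on X × Y. -/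
open Pointwise Set

lemma core_combo {V : Type*} [AddCommGroup V] [Module ℝ V] {K : Set V} (hK : Convex ℝ K)
    {a b : V} (ha : a ∈ algCore K) (hb : b ∈ K) {s : ℝ} (hs0 : 0 < s) (hs1 : s ≤ 1) :
    s • a + (1 - s) • b ∈ algCore K := by
  refine ⟨hK ha.1 hb (a := s) (b := 1 - s) hs0.le (by linarith) (by ring), fun v => ?_⟩
  obtain ⟨δ, hδ, hδ'⟩ := ha.2 v
  refine ⟨s * δ, by positivity, fun t ht => ?_⟩
  have h1 : a + (t / s) • v ∈ K := by
    apply hδ'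
    rw [abs_div, abs_of_pos hs0, div_lt_iff₀ hs0, mul_comm]
    exact ht
  have h2 := hK h1 hb (a := s) (b := 1 - s) hs0.le (by linarith) (by ring)
  have h3 : s • (a + (t / s) • v) = s • a + t • v := by
    rw [smul_add, smul_smul, mul_div_cancel₀ _ hs0.ne']
  rw [h3] at h2
  have h4 : s • a + (1 - s) • b + t • v = s • a + t • v + (1 - s) • b := by abel
  rw [h4]
  exact h2

lemma alg_separation_s14 {V : Type*} [AddCommGroup V] [Module ℝ V] {K : Set V} (hK : Convex ℝ K)
    {k₀ : V} (hk₀ : k₀ ∈ algCore K) (h0 : (0 : V) ∉ algCore K) :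
    ∃ L : V →ₗ[ℝ] ℝ, (∀ k ∈ K, 0 ≤ L k) ∧ L k₀ = 1 := by
  have hk₀ne : k₀ ≠ 0 := fun h => h0 (h ▸ hk₀)
  set D : Set V := (· + k₀) ⁻¹' K with hDdef
  have hDmem : ∀ x : V, x ∈ D ↔ x + k₀ ∈ K := fun x => Iff.rfl
  have hDconv : Convex ℝ D := by
    intro x hx y hy a b ha hb hab
    have h2 := hK hx hy ha hb hab
    have h3 : a • ((fun z => z + k₀) x) + b • ((fun z => z + k₀) y) = (a • x + b • y) + k₀ := by
      show a • (x + k₀) + b • (y + k₀) = _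
      have h5 : a • (x + k₀) + b • (y + k₀) = a • x + b • y + (a + b) • k₀ := by module
      rw [h5, hab, one_smul]
    show (a • x + b • y) + k₀ ∈ K
    rw [← h3]
    exact h2
  have hD0 : ∀ v : V, ∃ δ : ℝ, 0 < δ ∧ ∀ t : ℝ, |t| < δ → t • v ∈ D := by
    intro v
    obtain ⟨δ, hδ, hδ'⟩ := hk₀.2 v
    exact ⟨δ, hδ, fun t ht => by rw [hDmem, add_comm]; exact hδ' t ht⟩
  have habs : Absorbent ℝ D := by
    intro x
    obtain ⟨δ, hδ, hδ'⟩ := hD0 x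
    rw [absorbs_iff_norm]
    refine ⟨2 / δ, fun c hc => ?_⟩
    rw [Real.norm_eq_abs] at hc
    have hcpos : 0 < |c| := lt_of_lt_of_le (by positivity) hc
    have hc0 : c ≠ 0 := fun h => by simp [h] at hcpos
    rw [Set.singleton_subset_iff, mem_smul_set_iff_inv_smul_mem₀ hc0]
    apply hδ'
    rw [abs_inv]
    have h1 : |c|⁻¹ ≤ (2 / δ)⁻¹ := inv_anti₀ (by positivity) hc
    have h2 : (2 / δ)⁻¹ = δ / 2 := by field_simp
    rw [h2] at h1; linarith
  have hone : 1 ≤ gauge D (-k₀) := by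
    by_contra hlt
    push_neg at hlt
    obtain ⟨t, ht0, ht1, htm⟩ := exists_lt_of_gauge_lt habs hlt
    obtain ⟨d, hd, hdt⟩ := htm
    have hdt' : t • d = -k₀ := hdt
    have hcomb : (1 - t) • k₀ + (1 - (1 - t)) • (d + k₀) = 0 := by
      rw [sub_sub_cancel, smul_add, hdt']
      module
    have h00 := core_combo hK hk₀ ((hDmem d).1 hd) (by linarith : (0:ℝ) < 1 - t)
      (by linarith : (1:ℝ) - t ≤ 1)
    rw [hcomb] at h00
    exact h0 h00
  let fp : V →ₗ.[ℝ] ℝ := LinearPMap.mkSpanSingleton (-k₀) 1 (neg_ne_zero.2 hk₀ne)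
  have hfp : ∀ x : fp.domain, fp x ≤ gauge D x := by
    rintro ⟨x, hx⟩
    obtain ⟨c, rfl⟩ := Submodule.mem_span_singleton.1 hx
    rw [LinearPMap.mkSpanSingleton'_apply]
    rcases le_or_gt 0 c with hc | hc
    · rw [gauge_smul_of_nonneg hc, smul_eq_mul, smul_eq_mul, mul_one]
      exact le_mul_of_one_le_right hc hone
    · have := gauge_nonneg (s := D) (c • -k₀)
      rw [smul_eq_mul, mul_one]
      simp only [RingHom.id_apply]
      linarith
  obtain ⟨L₀, hL₀e, hL₀le⟩ := exists_extension_of_le_sublinear fp (gauge D)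
    (fun c hc x => gauge_smul_of_nonneg hc.le x) (gauge_add_le hDconv habs) hfp
  have hL₀k : L₀ (-k₀) = 1 := by
    rw [← fp.domain.coe_mk (-k₀) (Submodule.mem_span_singleton_self _), hL₀e,
      ]
    exact LinearPMap.mkSpanSingleton'_apply_self _ _ _ _
  have hK' : ∀ k ∈ K, L₀ k ≤ 0 := by
    intro k hk
    have hmem : k - k₀ ∈ D := by rw [hDmem, sub_add_cancel]; exact hk
    have h1 : L₀ (k - k₀) ≤ 1 := (hL₀le _).trans (gauge_le_one_of_mem hmem)
    rw [map_neg] at hL₀k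
    rw [map_sub] at h1
    linarith
  refine ⟨-L₀, fun k hk => ?_, ?_⟩
  · rw [LinearMap.neg_apply]; linarith [hK' k hk]
  · rw [LinearMap.neg_apply]; rw [map_neg] at hL₀k; linarith

/-- subdifferential of the convex marginal (optimal value) function under
the first qualification condition. -/
theorem marginal_function_subdifferential_qc1 {X Y : Type*} [AddCommGroup X] [Module ℝ X]
    [AddCommGroup Y] [Module ℝ Y] (φ : X × Y → EReal) (F : X → Set Y)
    (hbot : ∀ p, φ p ≠ ⊥) (hconv : ConvexFun φ) (hconvF : Convex ℝ (svGraph F))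
    (μ : X → EReal) (hμ : ∀ x : X, μ x = ⨅ y ∈ F x, φ (x, y))
    (hfin : ∀ x : X, μ x ≠ ⊥) (xbar : X) (hxbar : xbar ∈ fDom μ)
    (hqc₁ : (algCore (epi φ)).Nonempty)
    (hqc₂ : (algCore (fDom φ) ∩ svGraph F).Nonempty)
    (ybar : Y) (hybar : ybar ∈ F xbar ∧ μ xbar = φ (xbar, ybar)) :
    subdiff μ xbar =
      {h : X →ₗ[ℝ] ℝ | ∃ (f : X →ₗ[ℝ] ℝ) (g : Y →ₗ[ℝ] ℝ),
        pairFun f g ∈ subdiff φ (xbar, ybar) ∧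
        ∃ f' ∈ coderiv F xbar ybar g, h = f + f'} := by
  obtain ⟨hyF, hyval⟩ := hybar
  have hμle : ∀ x : X, ∀ y ∈ F x, μ x ≤ φ (x, y) := by
    intro x y hy
    rw [hμ x]
    exact iInf₂_le y hy
  have hφtop : φ (xbar, ybar) ≠ ⊤ := by
    rw [← hyval]
    exact lt_top_iff_ne_top.1 hxbar
  set φbar : ℝ := (φ (xbar, ybar)).toReal with hφbardef
  have hφbar : (φbar : EReal) = φ (xbar, ybar) := EReal.coe_toReal hφtop (hbot _)
  have hμxbar : μ xbar = (φbar : EReal) := by rw [hφbar, hyval]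
  ext h
  simp only [Set.mem_setOf_eq]
  constructor
  · -- hard direction
    intro hh
    have hh' : ∀ x : X, μ xbar + ((h (x - xbar) : ℝ) : EReal) ≤ μ x := hh
    have keyGF : ∀ z ∈ svGraph F, ((φbar + h (z.1 - xbar) : ℝ) : EReal) ≤ φ z := by
      intro z hz
      calc ((φbar + h (z.1 - xbar) : ℝ) : EReal)
          = μ xbar + ((h (z.1 - xbar) : ℝ) : EReal) := by rw [hμxbar, ← EReal.coe_add]
        _ ≤ μ z.1 := hh' z.1
        _ ≤ φ (z.1, z.2) := hμle z.1 z.2 hz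
        _ = φ z := by rw [Prod.mk.eta]
    set A : Set ((X × Y) × ℝ) := epi φ with hA
    set B : Set ((X × Y) × ℝ) :=
      {p | p.1 ∈ svGraph F ∧ p.2 ≤ φbar + h (p.1.1 - xbar)} with hB
    have hAconv : Convex ℝ A := by
      rintro ⟨z1, r1⟩ hp ⟨z2, r2⟩ hq a b ha hb hab
      have hc := hconv z1 z2 a ha (by linarith)
      have hb' : (1 : ℝ) - a = b := by linarith
      rw [hb'] at hc
      have h1 : (a : EReal) * φ z1 ≤ (a : EReal) * (r1 : EReal) :=
        mul_le_mul_of_nonneg_left hp (by exact_mod_cast ha)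
      have h2 : (b : EReal) * φ z2 ≤ (b : EReal) * (r2 : EReal) :=
        mul_le_mul_of_nonneg_left hq (by exact_mod_cast hb)
      show φ (a • z1 + b • z2) ≤ ((a * r1 + b * r2 : ℝ) : EReal)
      calc φ (a • z1 + b • z2) ≤ (a : EReal) * φ z1 + (b : EReal) * φ z2 := hc
        _ ≤ (a : EReal) * (r1 : EReal) + (b : EReal) * (r2 : EReal) := add_le_add h1 h2
        _ = ((a * r1 + b * r2 : ℝ) : EReal) := by
            rw [← EReal.coe_mul, ← EReal.coe_mul, ← EReal.coe_add]
    have hBconv : Convex ℝ B := by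
      rintro ⟨z1, r1⟩ ⟨hp1, hp2⟩ ⟨z2, r2⟩ ⟨hq1, hq2⟩ a b ha hb hab
      refine ⟨hconvF hp1 hq1 ha hb hab, ?_⟩
      show a • r1 + b • r2 ≤ φbar + h ((a • z1 + b • z2).1 - xbar)
      have e1 : h ((a • z1 + b • z2).1 - xbar) = a * h z1.1 + b * h z2.1 - h xbar := by
        show h (a • z1.1 + b • z2.1 - xbar) = _
        rw [map_sub, map_add, map_smul, map_smul, smul_eq_mul, smul_eq_mul]
      have e2 : a * φbar + b * φbar = φbar := by rw [← add_mul, hab, one_mul]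
      have e3 : a * h xbar + b * h xbar = h xbar := by rw [← add_mul, hab, one_mul]
      rw [map_sub] at hp2 hq2
      have h1' := mul_le_mul_of_nonneg_left hp2 ha
      have h2' := mul_le_mul_of_nonneg_left hq2 hb
      rw [smul_eq_mul, smul_eq_mul, e1]
      have e5 : a * (φbar + (h z1.1 - h xbar)) = a * φbar + a * h z1.1 - a * h xbar := by ring
      have e6 : b * (φbar + (h z2.1 - h xbar)) = b * φbar + b * h z2.1 - b * h xbar := by ring
      linarith [h1', h2', e2, e3, e5, e6]
    obtain ⟨a₀, ha₀⟩ := hqc₁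
    have hb₀ : ((xbar, ybar), φbar) ∈ B := by
      refine ⟨hyF, ?_⟩
      show φbar ≤ φbar + h (xbar - xbar)
      simp
    set K : Set ((X × Y) × ℝ) := A - B with hK
    have hKconv : Convex ℝ K := hAconv.sub hBconv
    have hk₀core : a₀ - ((xbar, ybar), φbar) ∈ algCore K := by
      constructor
      · exact Set.sub_mem_sub ha₀.1 hb₀
      · intro v
        obtain ⟨δ, hδ, hδ'⟩ := ha₀.2 v
        refine ⟨δ, hδ, fun t ht => ?_⟩
        have e : a₀ - ((xbar, ybar), φbar) + t • v = (a₀ + t • v) - ((xbar, ybar), φbar) := by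
          abel
        rw [e]
        exact Set.sub_mem_sub (hδ' t ht) hb₀
    have h0notin : (0 : (X × Y) × ℝ) ∉ algCore K := by
      intro hcontra
      obtain ⟨δ, hδ, hδ'⟩ := hcontra.2 (((0 : X × Y), (1 : ℝ)))
      have hmem := hδ' (-(δ/2)) (by rw [abs_neg, abs_of_pos (by linarith)]; linarith)
      rw [zero_add] at hmem
      obtain ⟨a, ha, b, hb, hab⟩ := Set.mem_sub.1 hmem
      have h1 : a.1 = b.1 := by
        have := congrArg Prod.fst hab
        simpa [sub_eq_zero] using this
      have h2 : a.2 = b.2 - δ/2 := by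
        have := congrArg Prod.snd hab
        simp only [Prod.snd_sub, Prod.smul_snd, smul_eq_mul, mul_one] at this
        linarith
      have ha' : φ a.1 ≤ (a.2 : EReal) := ha
      have h3 : ((φbar + h (b.1.1 - xbar) : ℝ) : EReal) ≤ (a.2 : EReal) :=
        (keyGF b.1 hb.1).trans (h1 ▸ ha')
      have h4 : φbar + h (b.1.1 - xbar) ≤ a.2 := EReal.coe_le_coe_iff.1 h3
      have h5 : b.2 ≤ φbar + h (b.1.1 - xbar) := hb.2
      linarith
    obtain ⟨L, hL, hLk₀⟩ := alg_separation_s14 hKconv hk₀core h0notin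
    set ℓ : (X × Y) →ₗ[ℝ] ℝ := L ∘ₗ LinearMap.inl ℝ (X × Y) ℝ with hℓ
    set β : ℝ := L ((0 : X × Y), (1 : ℝ)) with hβ
    have hsplit : ∀ (z : X × Y) (r : ℝ), L (z, r) = ℓ z + r * β := by
      intro z r
      have h1 : ((z, r) : (X × Y) × ℝ) = ((z, (0:ℝ)) : (X × Y) × ℝ)
          + r • (((0 : X × Y), (1 : ℝ)) : (X × Y) × ℝ) := by
        simp [Prod.ext_iff]
      rw [h1, map_add, map_smul, smul_eq_mul]
      rfl
    have key : ∀ (z : X × Y) (r : ℝ), φ z ≤ (r : EReal) → ∀ (w : X × Y) (s : ℝ),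
        w ∈ svGraph F → s ≤ φbar + h (w.1 - xbar) → ℓ w + s * β ≤ ℓ z + r * β := by
      intro z r hzr w s hw hs
      have hmemA : ((z, r) : (X × Y) × ℝ) ∈ A := hzr
      have hmemB : ((w, s) : (X × Y) × ℝ) ∈ B := ⟨hw, hs⟩
      have h1 := hL _ (Set.sub_mem_sub hmemA hmemB)
      rw [map_sub, hsplit, hsplit] at h1
      linarith
    have hβ0 : 0 ≤ β := by
      have hzr : φ (xbar, ybar) ≤ ((φbar + 1 : ℝ) : EReal) := by
        rw [← hφbar]
        exact EReal.coe_le_coe_iff.2 (by linarith)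
      have hs : φbar ≤ φbar + h ((xbar, ybar).1 - xbar) := by simp
      have h1 := key (xbar, ybar) (φbar + 1) hzr (xbar, ybar) φbar hyF hs
      have e : (φbar + 1) * β = φbar * β + β := by ring
      linarith [h1, e]
    have hsplit' : ∀ p : (X × Y) × ℝ, L p = ℓ p.1 + p.2 * β := by
      intro p
      calc L p = L (p.1, p.2) := by rw [Prod.mk.eta]
        _ = ℓ p.1 + p.2 * β := hsplit p.1 p.2
    have hβne : β ≠ 0 := by
      intro hz
      obtain ⟨z₀, hz₀core, hz₀F⟩ := hqc₂
      have hdom : ∀ z ∈ fDom φ, ℓ z₀ ≤ ℓ z := by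
        intro z hzdom
        have hr : ((φ z).toReal : EReal) = φ z :=
          EReal.coe_toReal (lt_top_iff_ne_top.1 hzdom) (hbot z)
        have h1 := key z (φ z).toReal hr.ge z₀ (φbar + h (z₀.1 - xbar)) hz₀F le_rfl
        rw [hz] at h1
        simpa using h1
      have hℓ0 : ∀ v : X × Y, ℓ v = 0 := by
        intro v
        obtain ⟨δ, hδ, hδ'⟩ := hz₀core.2 v
        have hp := hdom _ (hδ' (δ/2) (by rw [abs_of_pos (by linarith)]; linarith))
        have hm := hdom _ (hδ' (-(δ/2)) (by rw [abs_neg, abs_of_pos (by linarith)]; linarith))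
        rw [map_add, map_smul, smul_eq_mul] at hp hm
        have h6 : δ/2 * ℓ v = 0 := by linarith
        rcases mul_eq_zero.1 h6 with h7 | h7
        · linarith
        · exact h7
      have hcontr : L (a₀ - ((xbar, ybar), φbar)) = 0 := by
        rw [map_sub, hsplit' a₀, hsplit']
        rw [hℓ0, hℓ0, hz]
        ring
      rw [hLk₀] at hcontr
      norm_num at hcontr
    have hβpos : 0 < β := lt_of_le_of_ne hβ0 (Ne.symm hβne)
    set Λ : (X × Y) →ₗ[ℝ] ℝ := (-(β⁻¹)) • ℓ with hΛ
    set f : X →ₗ[ℝ] ℝ := Λ ∘ₗ LinearMap.inl ℝ X Y with hf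
    set g : Y →ₗ[ℝ] ℝ := Λ ∘ₗ LinearMap.inr ℝ X Y with hg
    have hΛval : ∀ z : X × Y, Λ z = -(β⁻¹) * ℓ z := by
      intro z
      rw [hΛ, LinearMap.smul_apply, smul_eq_mul]
    have hpairadd : ∀ z : X × Y, f z.1 + g z.2 = Λ z := by
      intro z
      have h1 : (((z.1, (0:Y)) : X × Y)) + (((0:X), z.2) : X × Y) = z := by
        ext <;> simp
      have hfz : f z.1 = Λ (z.1, 0) := by rw [hf, LinearMap.comp_apply, LinearMap.inl_apply]
      have hgz : g z.2 = Λ (0, z.2) := by rw [hg, LinearMap.comp_apply, LinearMap.inr_apply]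
      rw [hfz, hgz, ← map_add, h1]
    have hpairfun : ∀ w : X × Y, pairFun f g w = f w.1 + g w.2 := by
      intro w
      simp [pairFun]
    have hpairΛ : ∀ w : X × Y, pairFun f g w = Λ w := fun w =>
      (hpairfun w).trans (hpairadd w)
    have div_trick : ∀ a b c d : ℝ, a + c * β ≤ b + d * β → c + (-(β⁻¹)) * (b - a) ≤ d := by
      intro a b c d hle
      rw [← sub_nonneg]
      have he : d - (c + (-(β⁻¹)) * (b - a)) = ((b + d * β) - (a + c * β)) / β := by
        field_simp
        ring
      rw [he]
      exact div_nonneg (by linarith) hβpos.le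
    refine ⟨f, g, ?_, h - f, ?_, ?_⟩
    · -- pairFun f g ∈ subdiff φ (xbar, ybar)
      intro z
      by_cases hz : φ z = ⊤
      · rw [hz]; exact le_top
      · have hr : ((φ z).toReal : EReal) = φ z := EReal.coe_toReal hz (hbot z)
        have hs : φbar ≤ φbar + h ((xbar, ybar).1 - xbar) := by simp
        have h1 := key z (φ z).toReal hr.ge (xbar, ybar) φbar hyF hs
        have h2 := div_trick (ℓ (xbar, ybar)) (ℓ z) φbar (φ z).toReal h1
        have h3 : pairFun f g (z - (xbar, ybar)) = -(β⁻¹) * (ℓ z - ℓ (xbar, ybar)) := by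
          rw [hpairΛ, hΛval, map_sub]
        calc φ (xbar, ybar) + ((pairFun f g (z - (xbar, ybar)) : ℝ) : EReal)
            = ((φbar + pairFun f g (z - (xbar, ybar)) : ℝ) : EReal) := by
              rw [← hφbar, ← EReal.coe_add]
          _ ≤ (((φ z).toReal : ℝ) : EReal) := EReal.coe_le_coe_iff.2 (by rw [h3]; exact h2)
          _ = φ z := hr
    · -- h - f ∈ coderiv F xbar ybar g
      intro x y hy
      have hzr : φ (xbar, ybar) ≤ (φbar : EReal) := hφbar.ge
      have h1 := key (xbar, ybar) φbar hzr (x, y) (φbar + h (x - xbar)) hy le_rfl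
      have h2 := div_trick (ℓ (x, y)) (ℓ (xbar, ybar)) (φbar + h (x - xbar)) φbar h1
      have h3 : f (x - xbar) + g (y - ybar) = -(β⁻¹) * (ℓ (x, y) - ℓ (xbar, ybar)) := by
        have hsub : (((x, y) : X × Y)) - (xbar, ybar) = (x - xbar, y - ybar) := rfl
        have h4 := hpairadd ((x - xbar, y - ybar) : X × Y)
        rw [← hsub, hΛval, map_sub] at h4
        exact h4
      rw [LinearMap.sub_apply]
      have e : (-(β⁻¹)) * (ℓ (xbar, ybar) - ℓ (x, y))
          = -((-(β⁻¹)) * (ℓ (x, y) - ℓ (xbar, ybar))) := by ring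
      linarith [h2, h3, e]
    · abel
  · -- easy direction
    rintro ⟨f, g, hfg, f', hf', rfl⟩
    intro x
    rw [hμ x]
    refine le_iInf₂ fun y hy => ?_
    have h1 := hfg (x, y)
    have h2 : f' (x - xbar) ≤ g (y - ybar) := by
      have := hf' x y hy
      linarith
    have h3 : pairFun f g (((x, y) : X × Y) - (xbar, ybar)) = f (x - xbar) + g (y - ybar) := rfl
    have h4 : (f + f') (x - xbar) ≤ f (x - xbar) + g (y - ybar) := by
      rw [LinearMap.add_apply]
      linarith
    calc μ xbar + (((f + f') (x - xbar) : ℝ) : EReal)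
        = (φbar : EReal) + (((f + f') (x - xbar) : ℝ) : EReal) := by rw [hμxbar]
      _ ≤ (φbar : EReal) + ((f (x - xbar) + g (y - ybar) : ℝ) : EReal) :=
          add_le_add le_rfl (EReal.coe_le_coe_iff.2 h4)
      _ = φ (xbar, ybar) + ((pairFun f g (((x, y) : X × Y) - (xbar, ybar)) : ℝ) : EReal) := by
          rw [hφbar, h3]
      _ ≤ φ (x, y) := h1
end

section
/- Let φ : X × Y → ℝ ∪ {+∞} be a convex function and F : X ⇒ Y a set-valued mapping with convex graph between real vector spaces, and let μ(x) := inf{φ(x, y) : y ∈ F(x)} be the associated marginal (optimal value) function. Assume μ(x) > −∞ for all x ∈ X, fix x̄ ∈ dom(μ), assume S(x̄) := {ȳ ∈ F(x̄) : μ(x̄) = φ(x̄, ȳ)} ≠ ∅, and assume the qualification condition dom(φ) ∩ core(gph(F)) ≠ ∅. Then for any ȳ ∈ S(x̄) one has ∂μ(x̄) = ∪{f + D*F(x̄, ȳ)(g) : (f, g) ∈ ∂φ(x̄, ȳ)}, where a pair (f, g) of linear functions on X and Y is identified with the linear function (x, y) ↦ f(x) + g(y) on X × Y. -/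
open Pointwise Set

/-- subdifferential of the convex marginal (optimal value) function under
the second qualification condition. -/
theorem marginal_function_subdifferential_qc2 {X Y : Type*} [AddCommGroup X] [Module ℝ X]
    [AddCommGroup Y] [Module ℝ Y] (φ : X × Y → EReal) (F : X → Set Y)
    (hbot : ∀ p, φ p ≠ ⊥) (hconv : ConvexFun φ) (hconvF : Convex ℝ (svGraph F))
    (μ : X → EReal) (hμ : ∀ x : X, μ x = ⨅ y ∈ F x, φ (x, y))
    (hfin : ∀ x : X, μ x ≠ ⊥) (xbar : X) (hxbar : xbar ∈ fDom μ)
    (hqc : (fDom φ ∩ algCore (svGraph F)).Nonempty)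
    (ybar : Y) (hybar : ybar ∈ F xbar ∧ μ xbar = φ (xbar, ybar)) :
    subdiff μ xbar =
      {h : X →ₗ[ℝ] ℝ | ∃ (f : X →ₗ[ℝ] ℝ) (g : Y →ₗ[ℝ] ℝ),
        pairFun f g ∈ subdiff φ (xbar, ybar) ∧
        ∃ f' ∈ coderiv F xbar ybar g, h = f + f'} := by
  classical
  obtain ⟨hyF, hμφ⟩ := hybar
  set zbar : X × Y := (xbar, ybar) with hzbar
  have hφztop : φ zbar ≠ ⊤ := by rw [← hμφ]; exact hxbar.ne
  have hφzbot : φ zbar ≠ ⊥ := hbot _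
  set rbar : ℝ := (φ zbar).toReal with hrbar
  have hφz : φ zbar = (rbar : EReal) := (EReal.coe_toReal hφztop hφzbot).symm
  have hpf : ∀ (f : X →ₗ[ℝ] ℝ) (g : Y →ₗ[ℝ] ℝ) (p : X × Y),
      pairFun f g p = f p.1 + g p.2 := by
    intro f g p; simp [pairFun]
  ext h
  simp only [Set.mem_setOf_eq]
  constructor
  · -- hard direction
    intro hh
    -- key inequality on the graph
    have key : ∀ p : X × Y, p ∈ svGraph F →
        ((rbar + h (p.1 - xbar) : ℝ) : EReal) ≤ φ p := by
      intro p hp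
      have h1 : μ p.1 ≤ φ p := by
        rw [hμ p.1]
        exact iInf₂_le p.2 hp
      have h2 := hh p.1
      rw [hμφ, hφz] at h2
      calc ((rbar + h (p.1 - xbar) : ℝ) : EReal)
          = (rbar : EReal) + (h (p.1 - xbar) : EReal) := by rw [EReal.coe_add]
        _ ≤ μ p.1 := h2
        _ ≤ φ p := h1
    -- the auxiliary family of sets
    set T : (X × Y) → Set ℝ := fun u =>
      {r | ∃ s : ℝ, 0 < s ∧ ∃ w : X × Y, zbar + w ∈ svGraph F ∧ ∃ ρ : ℝ,
        φ (zbar + s⁻¹ • u + w) = (ρ : EReal) ∧ r = s * (ρ - rbar - h w.1)} with hT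
    -- elements of T 0 are nonnegative
    have hT0 : ∀ r ∈ T 0, (0:ℝ) ≤ r := by
      rintro r ⟨s, hs, w, hw, ρ, hρ, rfl⟩
      have hpt : zbar + s⁻¹ • (0 : X × Y) + w = zbar + w := by module
      rw [hpt] at hρ
      have hk := key (zbar + w) hw
      have : (zbar + w).1 - xbar = w.1 := by simp [hzbar]
      rw [this, hρ, EReal.coe_le_coe_iff] at hk
      have : 0 ≤ ρ - rbar - h w.1 := by linarith
      positivity
    -- T u is nonempty
    obtain ⟨zhat, hzdom, hzΩ, hzcore⟩ := hqc
    have hzfin : ∃ ρ : ℝ, φ zhat = (ρ : EReal) :=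
      ⟨(φ zhat).toReal, (EReal.coe_toReal hzdom.ne (hbot _)).symm⟩
    have hTne : ∀ u, (T u).Nonempty := by
      intro u
      obtain ⟨ρ, hρ⟩ := hzfin
      obtain ⟨δ, hδ, hδmem⟩ := hzcore (-u)
      set t : ℝ := min (δ/2) 1 with htdef
      have ht0 : 0 < t := lt_min (by linarith) one_pos
      have htδ : |t| < δ := by
        rw [abs_of_pos ht0]
        calc t ≤ δ/2 := min_le_left _ _
          _ < δ := by linarith
      refine ⟨t⁻¹ * (ρ - rbar - h (zhat - zbar + t • (-u)).1), t⁻¹, inv_pos.2 ht0,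
        zhat - zbar + t • (-u), ?_, ρ, ?_, rfl⟩
      · have : zbar + (zhat - zbar + t • (-u)) = zhat + t • (-u) := by module
        rw [this]
        exact hδmem t htδ
      · have : zbar + (t⁻¹)⁻¹ • u + (zhat - zbar + t • (-u)) = zhat := by
          rw [inv_inv]; module
        rw [this]; exact hρ
    -- additivity-type combination
    have hAdd : ∀ u v : X × Y, ∀ a ∈ T u, ∀ b ∈ T v, ∃ r ∈ T (u + v), r ≤ a + b := by
      intro u v a ha b hb
      obtain ⟨s₁, hs₁, w₁, hw₁, ρ₁, hρ₁, rfl⟩ := ha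
      obtain ⟨s₂, hs₂, w₂, hw₂, ρ₂, hρ₂, rfl⟩ := hb
      have hss : (0:ℝ) < s₁ + s₂ := by linarith
      set t : ℝ := s₁ / (s₁ + s₂) with htdef
      have ht0 : 0 ≤ t := by positivity
      have ht1 : t ≤ 1 := by
        rw [htdef, div_le_one hss]; linarith
      have h1t : 1 - t = s₂ / (s₁ + s₂) := by rw [htdef]; field_simp; ring
      set z₁ : X × Y := zbar + s₁⁻¹ • u + w₁ with hz₁
      set z₂ : X × Y := zbar + s₂⁻¹ • v + w₂ with hz₂
      set w : X × Y := t • w₁ + (1 - t) • w₂ with hwdef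
      have hcomb : t • z₁ + (1 - t) • z₂ = zbar + (s₁ + s₂)⁻¹ • (u + v) + w := by
        rw [hz₁, hz₂, hwdef, h1t, htdef]
        match_scalars <;> (field_simp; try ring)
      have hconv1 := hconv z₁ z₂ t ht0 ht1
      rw [hρ₁, hρ₂, hcomb, ← EReal.coe_mul, ← EReal.coe_mul, ← EReal.coe_add] at hconv1
      have hne_top : φ (zbar + (s₁ + s₂)⁻¹ • (u + v) + w) ≠ ⊤ :=
        fun hc => by rw [hc] at hconv1; exact (not_le.mpr (EReal.coe_lt_top _)) (le_of_eq rfl |>.trans hconv1)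
      set ρ : ℝ := (φ (zbar + (s₁ + s₂)⁻¹ • (u + v) + w)).toReal with hρdef
      have hρ : φ (zbar + (s₁ + s₂)⁻¹ • (u + v) + w) = (ρ : EReal) :=
        (EReal.coe_toReal hne_top (hbot _)).symm
      rw [hρ, EReal.coe_le_coe_iff] at hconv1
      have hwΩ : zbar + w ∈ svGraph F := by
        have hc : t • (zbar + w₁) + (1 - t) • (zbar + w₂) = zbar + w := by
          rw [hwdef]; match_scalars <;> ring
        rw [← hc]
        exact hconvF hw₁ hw₂ ht0 (by linarith) (by ring)
      refine ⟨(s₁ + s₂) * (ρ - rbar - h w.1), ⟨s₁ + s₂, hss, w, hwΩ, ρ, hρ, rfl⟩, ?_⟩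
      have hwh : h w.1 = t * h w₁.1 + (1 - t) * h w₂.1 := by
        rw [hwdef]
        simp [Prod.fst_add, Prod.smul_fst, map_add, map_smul, smul_eq_mul]
      have e3 : (s₁+s₂) * (t * ρ₁ + (1-t) * ρ₂) = s₁ * ρ₁ + s₂ * ρ₂ := by
        rw [htdef]; field_simp; ring
      have e4 : (s₁+s₂) * (t * h w₁.1 + (1-t) * h w₂.1) = s₁ * h w₁.1 + s₂ * h w₂.1 := by
        rw [htdef]; field_simp; ring
      have hρle : (s₁+s₂) * ρ ≤ s₁ * ρ₁ + s₂ * ρ₂ :=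
        le_trans (mul_le_mul_of_nonneg_left hconv1 hss.le) (le_of_eq e3)
      calc (s₁ + s₂) * (ρ - rbar - h w.1)
          = (s₁+s₂)*ρ - (s₁+s₂)*rbar - (s₁+s₂) * (t * h w₁.1 + (1-t) * h w₂.1) := by
            rw [hwh]; ring
        _ = (s₁+s₂)*ρ - (s₁+s₂)*rbar - (s₁ * h w₁.1 + s₂ * h w₂.1) := by rw [e4]
        _ ≤ (s₁*ρ₁+s₂*ρ₂) - (s₁+s₂)*rbar - (s₁ * h w₁.1 + s₂ * h w₂.1) := by linarith
        _ = s₁ * (ρ₁ - rbar - h w₁.1) + s₂ * (ρ₂ - rbar - h w₂.1) := by ring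
    -- bounded below
    have hbdd : ∀ u, BddBelow (T u) := by
      intro u
      obtain ⟨b, hb⟩ := hTne (-u)
      refine ⟨-b, fun a ha => ?_⟩
      obtain ⟨r, hr, hrle⟩ := hAdd u (-u) a ha b hb
      rw [add_neg_cancel] at hr
      have := hT0 r hr
      linarith
    set N : (X × Y) → ℝ := fun u => sInf (T u) with hN
    have hNle : ∀ u, ∀ a ∈ T u, N u ≤ a := fun u a ha => csInf_le (hbdd u) ha
    have hN_add : ∀ u v, N (u + v) ≤ N u + N v := by
      intro u v
      have step : ∀ a ∈ T u, ∀ b ∈ T v, N (u + v) ≤ a + b := by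
        intro a ha b hb
        obtain ⟨r, hr, hrle⟩ := hAdd u v a ha b hb
        exact (hNle _ r hr).trans hrle
      have h1 : ∀ a ∈ T u, N (u + v) - a ≤ N v := fun a ha =>
        le_csInf (hTne v) fun b hb => by linarith [step a ha b hb]
      have h2 : N (u + v) - N v ≤ N u :=
        le_csInf (hTne u) fun a ha => by linarith [h1 a ha]
      linarith
    have hmem : ∀ c : ℝ, 0 < c → ∀ u, ∀ a ∈ T u, c * a ∈ T (c • u) := by
      rintro c hc u a ⟨s, hs, w, hw, ρ, hρ, rfl⟩
      refine ⟨c * s, by positivity, w, hw, ρ, ?_, by ring⟩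
      have : (c * s)⁻¹ • (c • u) = s⁻¹ • u := by
        rw [smul_smul]; congr 1; field_simp
      rw [this]; exact hρ
    have hNhom_le : ∀ c : ℝ, 0 < c → ∀ u, N (c • u) ≤ c * N u := by
      intro c hc u
      have h1 : ∀ a ∈ T u, N (c • u) ≤ c * a := fun a ha => hNle _ _ (hmem c hc u a ha)
      have h2 : N (c • u) / c ≤ N u := le_csInf (hTne u) fun a ha => by
        rw [div_le_iff₀ hc]
        linarith [h1 a ha, mul_comm c a]
      calc N (c • u) = c * (N (c • u) / c) := by field_simp
        _ ≤ c * N u := by nlinarith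
    have hN_hom : ∀ c : ℝ, 0 < c → ∀ u, N (c • u) = c * N u := by
      intro c hc u
      refine le_antisymm (hNhom_le c hc u) ?_
      have := hNhom_le c⁻¹ (by positivity) (c • u)
      rw [smul_smul, inv_mul_cancel₀ hc.ne', one_smul] at this
      calc c * N u ≤ c * (c⁻¹ * N (c • u)) := by nlinarith
        _ = N (c • u) := by field_simp
    have hN0 : 0 ≤ N 0 := le_csInf (hTne 0) hT0
    -- Hahn-Banach
    obtain ⟨ℓ, -, hℓ⟩ := exists_extension_of_le_sublinear
      ((0 : (X × Y) →ₗ[ℝ] ℝ).toPMap ⊥) N hN_hom hN_add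
      (by
        rintro ⟨x, hx⟩
        have hx0 : x = 0 := by simpa using hx
        subst hx0
        simpa [LinearMap.toPMap] using hN0)
    -- property A : h dominated by ℓ on the (shifted) graph
    have hA : ∀ w : X × Y, zbar + w ∈ svGraph F → h w.1 ≤ ℓ w := by
      intro w hw
      have hmemT : -h w.1 ∈ T (-w) := by
        refine ⟨1, one_pos, w, hw, rbar, ?_, by ring⟩
        have : zbar + (1:ℝ)⁻¹ • (-w) + w = zbar := by module
        rw [this]; exact hφz
      have := (hℓ (-w)).trans (hNle _ _ hmemT)
      rw [map_neg] at this
      linarith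
    -- property B : ℓ is a subgradient of φ at zbar
    have hB : ∀ z : X × Y, φ zbar + (ℓ (z - zbar) : EReal) ≤ φ z := by
      intro z
      by_cases hz : φ z = ⊤
      · rw [hz]; exact le_top
      · have hzρ : φ z = ((φ z).toReal : EReal) := (EReal.coe_toReal hz (hbot _)).symm
        have hmemT : (φ z).toReal - rbar ∈ T (z - zbar) := by
          refine ⟨1, one_pos, 0, by simpa [svGraph, hzbar] using hyF, (φ z).toReal, ?_, by simp⟩
          have : zbar + (1:ℝ)⁻¹ • (z - zbar) + 0 = z := by module
          rw [this]; exact hzρ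
        have hle := (hℓ (z - zbar)).trans (hNle _ _ hmemT)
        rw [hφz, hzρ, ← EReal.coe_add, EReal.coe_le_coe_iff]
        linarith
    -- assemble
    refine ⟨ℓ ∘ₗ LinearMap.inl ℝ X Y, ℓ ∘ₗ LinearMap.inr ℝ X Y, ?_, h - ℓ ∘ₗ LinearMap.inl ℝ X Y, ?_, by abel⟩
    · intro z
      have : pairFun (ℓ ∘ₗ LinearMap.inl ℝ X Y) (ℓ ∘ₗ LinearMap.inr ℝ X Y) (z - zbar)
          = ℓ (z - zbar) := by
        rw [hpf]
        simp only [LinearMap.comp_apply, LinearMap.inl_apply, LinearMap.inr_apply]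
        rw [← map_add]
        congr 1
        simp [Prod.ext_iff]
      rw [this]
      exact hB z
    · intro x y hy
      have hw := hA ((x, y) - zbar) (by simpa [svGraph, hzbar] using hy)
      simp only [LinearMap.sub_apply, LinearMap.comp_apply, LinearMap.inl_apply,
        LinearMap.inr_apply] at *
      have h1 : ((x, y) - zbar).1 = x - xbar := rfl
      rw [h1] at hw
      have h2 : ℓ (x - xbar, 0) + ℓ (0, y - ybar) = ℓ ((x,y) - zbar) := by
        rw [← map_add]; congr 1; simp [Prod.ext_iff, hzbar]
      linarith
  · -- easy direction
    rintro ⟨f, g, hfg, f', hf', rfl⟩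
    intro x
    rw [hμ x]
    refine le_iInf₂ fun y hy => ?_
    have h1 := hfg (x, y)
    have h2 := hf' x y hy
    rw [hpf] at h1
    have h3 : ((f + f') (x - xbar) : ℝ) ≤ f ((x,y) - zbar).1 + g ((x,y) - zbar).2 := by
      simp only [LinearMap.add_apply]
      have : ((x,y) - zbar).1 = x - xbar := rfl
      rw [this]
      have : ((x,y) - zbar).2 = y - ybar := rfl
      rw [this]
      linarith
    rw [hμφ]
    calc φ (xbar, ybar) + (((f + f') (x - xbar) : ℝ) : EReal)
        ≤ φ (xbar, ybar) + ((f ((x,y) - zbar).1 + g ((x,y) - zbar).2 : ℝ) : EReal) := by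
          exact add_le_add le_rfl (EReal.coe_le_coe_iff.2 h3)
      _ ≤ φ (x, y) := h1
end
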